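/- arXiv:2009.09037 — 10 statements merged into one kernel-verified Lean document; each statement's English description precedes it below -/
import Mathlib

section
/- Let G be a bipartite graph on n vertices. Then the number of 4-element vertex subsets of G inducing two disjoint edges is at most n^4 / 256. -/
open scoped Classical

private lemma four_mul_le_sq' (a b : ℕ) : 4 * (a * b) ≤ (a + b) ^ 2 := by
  have h : (4 * ((a : ℤ) * b) : ℤ) ≤ ((a : ℤ) + b) ^ 2 := by nlinarith [sq_nonneg ((a : ℤ) - b)]
  exact_mod_cast h

set_option maxHeartbeats 2000000 in
/-- In a bipartite graph on `n` vertices, the number of 4-element vertex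
subsets inducing two disjoint edges is at most `n^4 / 256`. -/
theorem stmt1 {V : Type*} [Fintype V] (G : SimpleGraph V) (n : ℕ)
    (hn : Fintype.card V = n)
    (hbip : ∃ M P : Finset V, Disjoint M P ∧ M ∪ P = Finset.univ ∧
      ∀ u v, G.Adj u v → (u ∈ M ∧ v ∈ P) ∨ (u ∈ P ∧ v ∈ M)) :
    256 * ((Finset.univ.powersetCard 4).filter (fun s : Finset V =>
        ∃ a b c d : V, s = {a, b, c, d} ∧
          a ≠ b ∧ a ≠ c ∧ a ≠ d ∧ b ≠ c ∧ b ≠ d ∧ c ≠ d ∧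
          G.Adj a b ∧ G.Adj c d ∧
          ¬ G.Adj a c ∧ ¬ G.Adj a d ∧ ¬ G.Adj b c ∧ ¬ G.Adj b d)).card
      ≤ n ^ 4 := by
  classical
  obtain ⟨M, P, hMP, hMPu, hadj⟩ := hbip
  have hmp : M.card + P.card = n := by
    rw [← Finset.card_union_of_disjoint hMP, hMPu, Finset.card_univ, hn]
  set e : V ≃ Fin (Fintype.card V) := Fintype.equivFin V with he
  set N : V → Finset V := fun x => Finset.univ.filter (fun y => G.Adj x y) with hN
  have hmemN : ∀ x y : V, y ∈ N x ↔ G.Adj x y := by intro x y; simp [hN]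
  have hMside : ∀ {x y : V}, G.Adj x y → x ∈ M → y ∈ P := by
    intro x y hxy hx
    rcases hadj x y hxy with ⟨_, h⟩ | ⟨h, _⟩
    · exact h
    · exact absurd h (Finset.disjoint_left.mp hMP hx)
  have hcases : ∀ {x y : V}, G.Adj x y → (x ∈ M ∧ y ∈ P) ∨ (y ∈ M ∧ x ∈ P) := by
    intro x y h
    rcases hadj x y h with h' | h'
    · exact Or.inl h'
    · exact Or.inr ⟨h'.2, h'.1⟩
  set T := (Finset.univ.powersetCard 4).filter (fun s : Finset V =>
        ∃ a b c d : V, s = {a, b, c, d} ∧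
          a ≠ b ∧ a ≠ c ∧ a ≠ d ∧ b ≠ c ∧ b ≠ d ∧ c ≠ d ∧
          G.Adj a b ∧ G.Adj c d ∧
          ¬ G.Adj a c ∧ ¬ G.Adj a d ∧ ¬ G.Adj b c ∧ ¬ G.Adj b d) with hT
  set U : Finset (V × V × V × V) := Finset.univ.filter (fun q =>
      q.1 ∈ M ∧ q.2.1 ∈ M ∧ e q.1 < e q.2.1 ∧ G.Adj q.1 q.2.2.1 ∧ G.Adj q.2.1 q.2.2.2 ∧
      ¬ G.Adj q.1 q.2.2.2 ∧ ¬ G.Adj q.2.1 q.2.2.1) with hU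
  -- swap helper
  have hswap : ∀ x z y w : V, x ∈ M → z ∈ M → x ≠ z → G.Adj x y → G.Adj z w →
      ¬ G.Adj x w → ¬ G.Adj z y →
      ∃ q : V × V × V × V, q ∈ U ∧ ({x, z, y, w} : Finset V) = {q.1, q.2.1, q.2.2.1, q.2.2.2} := by
    intro x z y w hx hz hxz h1 h2 h3 h4
    have hne : e x ≠ e z := fun h => hxz (e.injective h)
    rcases lt_or_gt_of_ne hne with hlt | hgt
    · exact ⟨(x, z, y, w), Finset.mem_filter.mpr ⟨Finset.mem_univ _, hx, hz, hlt, h1, h2, h3, h4⟩, rfl⟩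
    · refine ⟨(z, x, w, y), Finset.mem_filter.mpr ⟨Finset.mem_univ _, hz, hx, hgt, h2, h1, h4, h3⟩, ?_⟩
      ext v; simp only [Finset.mem_insert, Finset.mem_singleton]; tauto
  have key : ∀ s ∈ T, ∃ q : V × V × V × V, q ∈ U ∧
      s = {q.1, q.2.1, q.2.2.1, q.2.2.2} := by
    intro s hs
    obtain ⟨-, a, b, c, d, hsd, hab', hac', had', hbc', hbd', hcd', hab, hcd,
      nac, nad, nbc, nbd⟩ := Finset.mem_filter.mp hs
    rcases hcases hab with ⟨ha, hb⟩ | ⟨hb, ha⟩ <;> rcases hcases hcd with ⟨hc, hd⟩ | ⟨hd, hc⟩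
    · obtain ⟨q, hqU, heq⟩ := hswap a c b d ha hc hac' hab hcd nad (fun h => nbc h.symm)
      refine ⟨q, hqU, ?_⟩
      rw [hsd, show ({a, b, c, d} : Finset V) = {a, c, b, d} by
        ext v; simp only [Finset.mem_insert, Finset.mem_singleton]; tauto, heq]
    · obtain ⟨q, hqU, heq⟩ := hswap a d b c ha hd had' hab hcd.symm nac (fun h => nbd h.symm)
      refine ⟨q, hqU, ?_⟩
      rw [hsd, show ({a, b, c, d} : Finset V) = {a, d, b, c} by
        ext v; simp only [Finset.mem_insert, Finset.mem_singleton]; tauto, heq]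
    · obtain ⟨q, hqU, heq⟩ := hswap b c a d hb hc hbc' hab.symm hcd nbd (fun h => nac h.symm)
      refine ⟨q, hqU, ?_⟩
      rw [hsd, show ({a, b, c, d} : Finset V) = {b, c, a, d} by
        ext v; simp only [Finset.mem_insert, Finset.mem_singleton]; tauto, heq]
    · obtain ⟨q, hqU, heq⟩ := hswap b d a c hb hd hbd' hab.symm hcd.symm nbc (fun h => nad h.symm)
      refine ⟨q, hqU, ?_⟩
      rw [hsd, show ({a, b, c, d} : Finset V) = {b, d, a, c} by
        ext v; simp only [Finset.mem_insert, Finset.mem_singleton]; tauto, heq]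
  have hTU : T.card ≤ U.card := by
    rcases T.eq_empty_or_nonempty with h | ⟨s₀, hs₀⟩
    · simp [h]
    · have hne : Nonempty V := by
        obtain ⟨-, a, b, c, d, -⟩ := Finset.mem_filter.mp hs₀
        exact ⟨a⟩
      choose F hF1 hF2 using key
      apply Finset.card_le_card_of_injOn
        (fun s => if h : s ∈ T then F s h else Classical.arbitrary _)
      · intro s hs
        simp only [dif_pos hs]
        rw [Finset.mem_coe] at hs ⊢; rw [dif_pos hs]; exact hF1 s hs
      · intro s hs t ht hst
        simp only [Finset.mem_coe] at hs ht
        simp only [dif_pos hs, dif_pos ht] at hst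
        rw [hF2 s hs, hst, ← hF2 t ht]
  -- pair set
  set W : Finset (V × V) := Finset.univ.filter (fun r =>
      r.1 ∈ M ∧ r.2 ∈ M ∧ e r.1 < e r.2) with hW
  have hUcard : U.card = ∑ r ∈ W, (U.filter (fun q => (q.1, q.2.1) = r)).card := by
    apply Finset.card_eq_sum_card_fiberwise
    intro q hq
    obtain ⟨-, h1, h2, h3, -⟩ := Finset.mem_filter.mp hq
    exact Finset.mem_filter.mpr ⟨Finset.mem_univ _, h1, h2, h3⟩
  have hfiber : ∀ r ∈ W, (U.filter (fun q => (q.1, q.2.1) = r)).card ≤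
      (N r.1 \ N r.2).card * (N r.2 \ N r.1).card := by
    intro r hr
    have h := Finset.card_le_card_of_injOn (fun q : V × V × V × V => (q.2.2.1, q.2.2.2))
      (s := U.filter (fun q => (q.1, q.2.1) = r)) (t := (N r.1 \ N r.2) ×ˢ (N r.2 \ N r.1))
      ?_ ?_
    · simpa [Finset.card_product] using h
    · intro q hq
      obtain ⟨hqU, hqr⟩ := Finset.mem_filter.mp hq
      obtain ⟨-, h1, h2, h3, h4, h5, h6, h7⟩ := Finset.mem_filter.mp hqU
      have e1 : q.1 = r.1 := congrArg Prod.fst hqr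
      have e2 : q.2.1 = r.2 := congrArg Prod.snd hqr
      simp only [Finset.mem_coe, Finset.mem_product, Finset.mem_sdiff, hmemN]
      rw [← e1, ← e2]
      exact ⟨⟨h4, h7⟩, ⟨h5, h6⟩⟩
    · intro q hq q' hq' hqq
      simp only [Finset.coe_filter, Set.mem_setOf_eq] at hq hq'
      obtain ⟨-, hr1⟩ := hq
      obtain ⟨-, hr2⟩ := hq'
      have e1 : q.1 = q'.1 := by
        rw [show q.1 = r.1 from congrArg Prod.fst hr1, show q'.1 = r.1 from congrArg Prod.fst hr2]
      have e2 : q.2.1 = q'.2.1 := by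
        rw [show q.2.1 = r.2 from congrArg Prod.snd hr1, show q'.2.1 = r.2 from congrArg Prod.snd hr2]
      have e3 : q.2.2.1 = q'.2.2.1 := congrArg Prod.fst hqq
      have e4 : q.2.2.2 = q'.2.2.2 := congrArg Prod.snd hqq
      obtain ⟨a1, a2, a3, a4⟩ := q
      obtain ⟨b1, b2, b3, b4⟩ := q'
      simp_all
  -- the separated-triples set
  set S3 : Finset ((V × V) × V) := W.biUnion (fun r =>
      ((N r.1 \ N r.2) ∪ (N r.2 \ N r.1)).image (fun y => (r, y))) with hS3
  have hS3card : S3.card = ∑ r ∈ W, ((N r.1 \ N r.2).card + (N r.2 \ N r.1).card) := by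
    rw [hS3, Finset.card_biUnion]
    · apply Finset.sum_congr rfl
      intro r hr
      rw [Finset.card_image_of_injective _ (fun y y' h => congrArg Prod.snd h),
        Finset.card_union_of_disjoint (disjoint_sdiff_sdiff)]
    · intro r hr r' hr' hrr
      simp only [Finset.disjoint_left]
      intro t ht ht'
      obtain ⟨y, -, rfl⟩ := Finset.mem_image.mp ht
      obtain ⟨y', -, h⟩ := Finset.mem_image.mp ht'
      exact hrr (congrArg Prod.fst h).symm
  have hmemS3 : ∀ t : (V × V) × V, t ∈ S3 ↔ t.1 ∈ W ∧
      (t.2 ∈ N t.1.1 \ N t.1.2 ∨ t.2 ∈ N t.1.2 \ N t.1.1) := by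
    intro t
    constructor
    · intro ht
      obtain ⟨r, hrW, him⟩ := Finset.mem_biUnion.mp ht
      obtain ⟨y, hy, rfl⟩ := Finset.mem_image.mp him
      exact ⟨hrW, by simpa using Finset.mem_union.mp hy⟩
    · rintro ⟨h1, h2⟩
      apply Finset.mem_biUnion.mpr
      exact ⟨t.1, h1, Finset.mem_image.mpr ⟨t.2, Finset.mem_union.mpr (by simpa using h2), rfl⟩⟩
  have hS3card2 : S3.card = ∑ y ∈ (Finset.univ : Finset V),
      (S3.filter (fun t => t.2 = y)).card :=
    Finset.card_eq_sum_card_fiberwise (fun t _ => Finset.mem_univ _)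
  -- per-vertex fiber bound
  have hfib2 : ∀ y : V, y ∈ P → 4 * (S3.filter (fun t => t.2 = y)).card ≤ M.card ^ 2 := by
    intro y hy
    have hb : (S3.filter (fun t => t.2 = y)).card ≤
        (M.filter (fun x => G.Adj x y)).card * (M.filter (fun x => ¬ G.Adj x y)).card := by
      have h := Finset.card_le_card_of_injOn
        (fun t : (V × V) × V => if G.Adj t.1.1 y then (t.1.1, t.1.2) else (t.1.2, t.1.1))
        (s := S3.filter (fun t => t.2 = y))
        (t := (M.filter (fun x => G.Adj x y)) ×ˢ (M.filter (fun x => ¬ G.Adj x y))) ?_ ?_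
      · simpa [Finset.card_product] using h
      · intro t ht
        obtain ⟨htS, hty⟩ := Finset.mem_filter.mp ht
        obtain ⟨htW, hsep⟩ := (hmemS3 t).mp htS
        obtain ⟨-, hx, hz, -⟩ := Finset.mem_filter.mp htW
        subst hty
        show (if G.Adj t.1.1 t.2 then (t.1.1, t.1.2) else (t.1.2, t.1.1)) ∈ _
        rcases hsep with hsep | hsep <;>
          simp only [Finset.mem_sdiff, hmemN] at hsep
        · rw [if_pos hsep.1]
          simp only [Finset.mem_coe, Finset.mem_product, Finset.mem_filter]
          exact ⟨⟨hx, hsep.1⟩, ⟨hz, hsep.2⟩⟩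
        · rw [if_neg hsep.2]
          simp only [Finset.mem_coe, Finset.mem_product, Finset.mem_filter]
          exact ⟨⟨hz, hsep.1⟩, ⟨hx, hsep.2⟩⟩
      · intro t ht t' ht' htt
        simp only [Finset.coe_filter, Set.mem_setOf_eq] at ht ht'
        obtain ⟨htS, hty⟩ := ht
        obtain ⟨htS', hty'⟩ := ht'
        obtain ⟨htW, -⟩ := (hmemS3 t).mp htS
        obtain ⟨htW', -⟩ := (hmemS3 t').mp htS'
        obtain ⟨-, -, -, hlt⟩ := Finset.mem_filter.mp htW
        obtain ⟨-, -, -, hlt'⟩ := Finset.mem_filter.mp htW'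
        have h1 : t.1 = t'.1 := by
          by_cases c1 : G.Adj t.1.1 y <;> by_cases c2 : G.Adj t'.1.1 y <;>
            simp only [c1, c2, if_true, if_false] at htt
          · exact Prod.ext (congrArg Prod.fst htt) (congrArg Prod.snd htt)
          · have e1 : t.1.1 = t'.1.2 := congrArg Prod.fst htt
            have e2 : t.1.2 = t'.1.1 := congrArg Prod.snd htt
            rw [e1, e2] at hlt
            exact absurd hlt (asymm hlt')
          · have e1 : t.1.2 = t'.1.1 := congrArg Prod.fst htt
            have e2 : t.1.1 = t'.1.2 := congrArg Prod.snd htt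
            rw [e1, e2] at hlt
            exact absurd hlt (asymm hlt')
          · have e1 : t.1.2 = t'.1.2 := congrArg Prod.fst htt
            have e2 : t.1.1 = t'.1.1 := congrArg Prod.snd htt
            exact Prod.ext e2 e1
        have h2 : t.2 = t'.2 := by rw [hty, hty']
        exact Prod.ext h1 h2
    have hsum : (M.filter (fun x => G.Adj x y)).card + (M.filter (fun x => ¬ G.Adj x y)).card
        = M.card := Finset.card_filter_add_card_filter_not _
    calc 4 * (S3.filter (fun t => t.2 = y)).card
        ≤ 4 * ((M.filter (fun x => G.Adj x y)).card * (M.filter (fun x => ¬ G.Adj x y)).card) :=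
          Nat.mul_le_mul_left _ hb
      _ ≤ ((M.filter (fun x => G.Adj x y)).card + (M.filter (fun x => ¬ G.Adj x y)).card) ^ 2 :=
          four_mul_le_sq' _ _
      _ = M.card ^ 2 := by rw [hsum]
  have hfib2zero : ∀ y : V, y ∉ P → (S3.filter (fun t => t.2 = y)).card = 0 := by
    intro y hy
    rw [Finset.card_eq_zero]
    apply Finset.filter_eq_empty_iff.mpr
    intro t htS hty
    obtain ⟨htW, hsep⟩ := (hmemS3 t).mp htS
    obtain ⟨-, hx, hz, -⟩ := Finset.mem_filter.mp htW
    subst hty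
    rcases hsep with hsep | hsep <;> simp only [Finset.mem_sdiff, hmemN] at hsep
    · exact hy (hMside hsep.1 hx)
    · exact hy (hMside hsep.1 hz)
  -- assemble
  have hstep1 : ∀ r ∈ W, 16 * ((N r.1 \ N r.2).card * (N r.2 \ N r.1).card) ≤
      4 * P.card * ((N r.1 \ N r.2).card + (N r.2 \ N r.1).card) := by
    intro r hr
    obtain ⟨-, hx, hz, -⟩ := Finset.mem_filter.mp hr
    have hsub : (N r.1 \ N r.2) ∪ (N r.2 \ N r.1) ⊆ P := by
      intro y hy
      rcases Finset.mem_union.mp hy with h | h <;> simp only [Finset.mem_sdiff, hmemN] at h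
      · exact hMside h.1 hx
      · exact hMside h.1 hz
    have hle : (N r.1 \ N r.2).card + (N r.2 \ N r.1).card ≤ P.card := by
      rw [← Finset.card_union_of_disjoint (disjoint_sdiff_sdiff)]
      exact Finset.card_le_card hsub
    calc 16 * ((N r.1 \ N r.2).card * (N r.2 \ N r.1).card)
        = 4 * (4 * ((N r.1 \ N r.2).card * (N r.2 \ N r.1).card)) := by ring
      _ ≤ 4 * (((N r.1 \ N r.2).card + (N r.2 \ N r.1).card) ^ 2) :=
          Nat.mul_le_mul_left _ (four_mul_le_sq' _ _)
      _ = 4 * (((N r.1 \ N r.2).card + (N r.2 \ N r.1).card) *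
            ((N r.1 \ N r.2).card + (N r.2 \ N r.1).card)) := by ring
      _ ≤ 4 * (P.card * ((N r.1 \ N r.2).card + (N r.2 \ N r.1).card)) :=
          Nat.mul_le_mul_left _ (Nat.mul_le_mul_right _ hle)
      _ = 4 * P.card * ((N r.1 \ N r.2).card + (N r.2 \ N r.1).card) := by ring
  have hUS3 : 16 * U.card ≤ 4 * P.card * S3.card := by
    calc 16 * U.card = ∑ r ∈ W, 16 * (U.filter (fun q => (q.1, q.2.1) = r)).card := by
          rw [hUcard, Finset.mul_sum]
      _ ≤ ∑ r ∈ W, 4 * P.card * ((N r.1 \ N r.2).card + (N r.2 \ N r.1).card) := by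
          apply Finset.sum_le_sum
          intro r hr
          calc 16 * (U.filter (fun q => (q.1, q.2.1) = r)).card
              ≤ 16 * ((N r.1 \ N r.2).card * (N r.2 \ N r.1).card) :=
                Nat.mul_le_mul_left _ (hfiber r hr)
            _ ≤ _ := hstep1 r hr
      _ = 4 * P.card * S3.card := by rw [hS3card, Finset.mul_sum]
  have hS3P : 4 * S3.card ≤ P.card * M.card ^ 2 := by
    have : 4 * S3.card = ∑ y ∈ (Finset.univ : Finset V),
        4 * (S3.filter (fun t => t.2 = y)).card := by
      rw [hS3card2, Finset.mul_sum]
    rw [this]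
    have hsub : ∑ y ∈ (Finset.univ : Finset V), 4 * (S3.filter (fun t => t.2 = y)).card
        = ∑ y ∈ P, 4 * (S3.filter (fun t => t.2 = y)).card := by
      apply (Finset.sum_subset (Finset.subset_univ P) _).symm
      intro y _ hy
      rw [hfib2zero y hy]
      ring
    rw [hsub]
    calc ∑ y ∈ P, 4 * (S3.filter (fun t => t.2 = y)).card ≤ ∑ y ∈ P, M.card ^ 2 :=
          Finset.sum_le_sum (fun y hy => hfib2 y hy)
      _ = P.card * M.card ^ 2 := by rw [Finset.sum_const, smul_eq_mul]
  -- final arithmetic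
  have hfin : 16 * (P.card ^ 2 * M.card ^ 2) ≤ (M.card + P.card) ^ 4 := by
    have h1 : 4 * (M.card * P.card) ≤ (M.card + P.card) ^ 2 := four_mul_le_sq' _ _
    calc 16 * (P.card ^ 2 * M.card ^ 2) = (4 * (M.card * P.card)) * (4 * (M.card * P.card)) := by
          ring
      _ ≤ (M.card + P.card) ^ 2 * (M.card + P.card) ^ 2 := Nat.mul_le_mul h1 h1
      _ = (M.card + P.card) ^ 4 := by ring
  calc 256 * T.card ≤ 256 * U.card := Nat.mul_le_mul_left _ hTU
    _ = 16 * (16 * U.card) := by ring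
    _ ≤ 16 * (4 * P.card * S3.card) := Nat.mul_le_mul_left _ hUS3
    _ = 16 * P.card * (4 * S3.card) := by ring
    _ ≤ 16 * P.card * (P.card * M.card ^ 2) := Nat.mul_le_mul_left _ hS3P
    _ = 16 * (P.card ^ 2 * M.card ^ 2) := by ring
    _ ≤ (M.card + P.card) ^ 4 := hfin
    _ = n ^ 4 := by rw [hmp]
end

section
/- Let G be a bipartite graph with bipartition M, P, |M| = m, |P| = p, with degrees r_i of vertices in M and c_j of vertices in P, and common-neighbor counts t_{i,j}. Then Σ_{i<j} [(r_i − t_{i,j}) + (r_j − t_{i,j})] ≤ m^2 · p / 4. -/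
open scoped Classical

open Finset

/-- Per-column bound: if `b` is a 0/1 vector of length `m`, then
`4 * ∑_{i<j} (b i - b j)^2 ≤ m^2`. -/
lemma col_bound (m : ℕ) (b : Fin m → ℤ) (hb : ∀ i, b i = 0 ∨ b i = 1) :
    4 * (∑ i : Fin m, ∑ j ∈ Finset.Ioi i, (b i - b j) ^ 2) ≤ (m : ℤ) ^ 2 := by
  have hsq : ∀ i, b i ^ 2 = b i := by
    intro i; rcases hb i with h | h <;> simp [h]
  set s : ℤ := ∑ i : Fin m, b i with hs
  -- split each inner full sum at i
  have split : ∀ i : Fin m, (∑ j : Fin m, (b j - b i) ^ 2)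
      = (∑ j ∈ Finset.Iio i, (b j - b i) ^ 2) + ∑ j ∈ Finset.Ioi i, (b j - b i) ^ 2 := by
    intro i
    have h1 : (Finset.univ : Finset (Fin m)) = Finset.Iio i ∪ Finset.Ici i := by
      ext x; simp [lt_or_ge x i]
    have hdisj : Disjoint (Finset.Iio i) (Finset.Ici i) := by
      simp [Finset.disjoint_left]
    rw [h1, Finset.sum_union hdisj]
    congr 1
    rw [Finset.Ici_eq_cons_Ioi, Finset.sum_cons]
    simp
  -- swap the Iio double sum into an Ioi double sum
  have swap : (∑ i : Fin m, ∑ j ∈ Finset.Iio i, (b j - b i) ^ 2)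
      = ∑ j : Fin m, ∑ i ∈ Finset.Ioi j, (b j - b i) ^ 2 := by
    refine Finset.sum_comm' ?_
    intro x y; simp
  have key : 2 * (∑ i : Fin m, ∑ j ∈ Finset.Ioi i, (b i - b j) ^ 2)
      = ∑ i : Fin m, ∑ j : Fin m, (b j - b i) ^ 2 := by
    calc 2 * (∑ i : Fin m, ∑ j ∈ Finset.Ioi i, (b i - b j) ^ 2)
        = (∑ i : Fin m, ∑ j ∈ Finset.Ioi i, (b i - b j) ^ 2)
          + ∑ i : Fin m, ∑ j ∈ Finset.Ioi i, (b j - b i) ^ 2 := by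
          rw [two_mul]
          congr 1
          exact Finset.sum_congr rfl fun i _ => Finset.sum_congr rfl fun j _ => by ring
      _ = (∑ i : Fin m, ∑ j ∈ Finset.Iio i, (b j - b i) ^ 2)
          + ∑ i : Fin m, ∑ j ∈ Finset.Ioi i, (b j - b i) ^ 2 := by
          rw [swap]
      _ = ∑ i : Fin m, ∑ j : Fin m, (b j - b i) ^ 2 := by
          rw [← Finset.sum_add_distrib]
          exact (Finset.sum_congr rfl fun i _ => (split i).symm)
  -- evaluate the full double sum
  have e1 : ∀ i : Fin m, (∑ j : Fin m, (b j - b i) ^ 2) = s + (m : ℤ) * b i - 2 * b i * s := by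
    intro i
    have expand : ∀ j, (b j - b i) ^ 2 = b j + b i - 2 * b i * b j := by
      intro j; nlinarith [hsq i, hsq j]
    calc (∑ j : Fin m, (b j - b i) ^ 2)
        = ∑ j : Fin m, (b j + b i - 2 * b i * b j) :=
          Finset.sum_congr rfl fun j _ => expand j
      _ = ((∑ j : Fin m, b j) + ∑ _j : Fin m, b i) - ∑ j : Fin m, 2 * b i * b j := by
          rw [Finset.sum_sub_distrib, Finset.sum_add_distrib]
      _ = s + (m : ℤ) * b i - 2 * b i * s := by
          rw [← Finset.mul_sum, ← hs, Finset.sum_const, Finset.card_univ, Fintype.card_fin,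
            nsmul_eq_mul]
  have hfull : (∑ i : Fin m, ∑ j : Fin m, (b j - b i) ^ 2) = 2 * (m : ℤ) * s - 2 * s ^ 2 := by
    calc (∑ i : Fin m, ∑ j : Fin m, (b j - b i) ^ 2)
        = ∑ i : Fin m, (s + (m : ℤ) * b i - 2 * b i * s) :=
          Finset.sum_congr rfl fun i _ => e1 i
      _ = ((∑ _i : Fin m, s) + ∑ i : Fin m, (m : ℤ) * b i) - ∑ i : Fin m, 2 * b i * s := by
          rw [Finset.sum_sub_distrib, Finset.sum_add_distrib]
      _ = 2 * (m : ℤ) * s - 2 * s ^ 2 := by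
          rw [Finset.sum_const, Finset.card_univ, Fintype.card_fin, nsmul_eq_mul,
            ← Finset.mul_sum, ← hs]
          have h2 : (∑ i : Fin m, 2 * b i * s) = 2 * s * s := by
            rw [← Finset.sum_mul, ← Finset.mul_sum, ← hs]
          rw [h2]; ring
  nlinarith [sq_nonneg ((m : ℤ) - 2 * s), key, hfull]

/-- In a bipartite graph with parts of sizes `m` and `p`,
`∑_{i<j} [(r i − t i j) + (r j − t i j)] ≤ m^2 · p / 4`. -/
theorem stmt3 {V : Type*} [Fintype V] (G : SimpleGraph V)
    (m p : ℕ) (u : Fin m ↪ V) (v : Fin p ↪ V)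
    (hcover : ∀ x : V, (∃ i, u i = x) ∨ (∃ j, v j = x))
    (hdisj : ∀ i j, u i ≠ v j)
    (hbip : ∀ x y, G.Adj x y →
      ((∃ i, u i = x) ∧ (∃ j, v j = y)) ∨ ((∃ j, v j = x) ∧ (∃ i, u i = y))) :
    4 * (∑ i : Fin m, ∑ j ∈ Finset.Ioi i,
        (((G.degree (u i) : ℤ) -
            ((Finset.univ.filter fun k : Fin p => G.Adj (u i) (v k) ∧ G.Adj (u j) (v k)).card : ℤ)) +
         ((G.degree (u j) : ℤ) -
            ((Finset.univ.filter fun k : Fin p => G.Adj (u i) (v k) ∧ G.Adj (u j) (v k)).card : ℤ))))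
      ≤ (m : ℤ) ^ 2 * (p : ℤ) := by
  classical
  -- indicator
  set a : Fin m → Fin p → ℤ := fun i k => if G.Adj (u i) (v k) then 1 else 0 with ha
  have ha01 : ∀ i k, a i k = 0 ∨ a i k = 1 := by
    intro i k; by_cases h : G.Adj (u i) (v k) <;> simp [ha, h]
  -- degree of u i as a sum of indicators
  have hdeg : ∀ i, (G.degree (u i) : ℤ) = ∑ k : Fin p, a i k := by
    intro i
    have hset : G.neighborFinset (u i)
        = (Finset.univ.filter fun k : Fin p => G.Adj (u i) (v k)).image v := by
      ext x
      simp only [SimpleGraph.mem_neighborFinset, Finset.mem_image, Finset.mem_filter,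
        Finset.mem_univ, true_and]
      constructor
      · intro hadj
        rcases hbip _ _ hadj with ⟨_, ⟨j, hj⟩⟩ | ⟨⟨j, hj⟩, _⟩
        · exact ⟨j, by rwa [hj], hj⟩
        · exact absurd hj.symm (hdisj i j)
      · rintro ⟨k, hk, rfl⟩; exact hk
    rw [SimpleGraph.degree, hset, Finset.card_image_of_injective _ v.injective,
      Finset.card_filter]
    push_cast
    rfl
  -- common neighbors as a sum of products of indicators
  have hcap : ∀ i j, ((Finset.univ.filter fun k : Fin p =>
      G.Adj (u i) (v k) ∧ G.Adj (u j) (v k)).card : ℤ) = ∑ k : Fin p, a i k * a j k := by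
    intro i j
    rw [Finset.card_filter]
    push_cast
    refine Finset.sum_congr rfl fun k _ => ?_
    by_cases h1 : G.Adj (u i) (v k) <;> by_cases h2 : G.Adj (u j) (v k) <;>
      simp [ha, h1, h2]
  -- rewrite each summand as ∑_k (a i k - a j k)^2
  have hsummand : ∀ i j,
      (((G.degree (u i) : ℤ) -
          ((Finset.univ.filter fun k : Fin p => G.Adj (u i) (v k) ∧ G.Adj (u j) (v k)).card : ℤ)) +
       ((G.degree (u j) : ℤ) -
          ((Finset.univ.filter fun k : Fin p => G.Adj (u i) (v k) ∧ G.Adj (u j) (v k)).card : ℤ)))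
      = ∑ k : Fin p, (a i k - a j k) ^ 2 := by
    intro i j
    rw [hdeg i, hdeg j, hcap i j]
    rw [← Finset.sum_sub_distrib, ← Finset.sum_sub_distrib, ← Finset.sum_add_distrib]
    refine Finset.sum_congr rfl fun k _ => ?_
    rcases ha01 i k with h1 | h1 <;> rcases ha01 j k with h2 | h2 <;> rw [h1, h2] <;> ring
  calc 4 * (∑ i : Fin m, ∑ j ∈ Finset.Ioi i,
        (((G.degree (u i) : ℤ) -
            ((Finset.univ.filter fun k : Fin p => G.Adj (u i) (v k) ∧ G.Adj (u j) (v k)).card : ℤ)) +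
         ((G.degree (u j) : ℤ) -
            ((Finset.univ.filter fun k : Fin p => G.Adj (u i) (v k) ∧ G.Adj (u j) (v k)).card : ℤ))))
      = ∑ k : Fin p, 4 * (∑ i : Fin m, ∑ j ∈ Finset.Ioi i, (a i k - a j k) ^ 2) := by
        simp_rw [hsummand]
        rw [← Finset.mul_sum]
        congr 1
        rw [Finset.sum_comm]
        refine Finset.sum_congr rfl fun i _ => Finset.sum_comm
    _ ≤ ∑ _k : Fin p, (m : ℤ) ^ 2 := by
        refine Finset.sum_le_sum fun k _ => ?_
        exact col_bound m (fun i => a i k) (fun i => ha01 i k)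
    _ = (m : ℤ) ^ 2 * (p : ℤ) := by simp [mul_comm]
end

section
/- For all positive integers n and all integers m with 0 ≤ m ≤ n, (n − m)·m·(m − 1)/2 ≤ (n − ⌈2n/3⌉)·⌈2n/3⌉·(⌈2n/3⌉ − 1)/2; in particular the quantity (n−m)·m·(m−1) over 0 ≤ m ≤ n is maximized at m = ⌈2n/3⌉. -/
lemma aux_sq (x : ℤ) (hx : 0 ≤ x) : 0 ≤ x * (x - 1) := by
  rcases hx.eq_or_lt with h | h
  · simp [← h]
  · exact mul_nonneg hx (by omega)


/-- For `0 ≤ m ≤ n`, `(n−m)·m·(m−1)/2` is maximized at `m = ⌈2n/3⌉`. -/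
theorem stmt5 (n : ℕ) (hn : 0 < n) (m : ℕ) (hm : m ≤ n) :
    (n - m) * m * (m - 1) / 2 ≤
      (n - (⌈(2 * n : ℚ) / 3⌉).toNat) * (⌈(2 * n : ℚ) / 3⌉).toNat *
        ((⌈(2 * n : ℚ) / 3⌉).toNat - 1) / 2 := by
  set c : ℤ := ⌈(2 * n : ℚ) / 3⌉ with hc
  have hcpos : 0 < c := by
    apply Int.ceil_pos.mpr
    positivity
  have h1 : (2 * n : ℤ) ≤ 3 * c := by
    have := Int.le_ceil ((2 * n : ℚ) / 3)
    rw [← hc] at this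
    have : (2 * n : ℚ) ≤ 3 * c := by linarith [this]
    exact_mod_cast this
  have h2 : 3 * c ≤ 2 * n + 2 := by
    have := Int.ceil_lt_add_one ((2 * n : ℚ) / 3)
    rw [← hc] at this
    have : (3 : ℚ) * c < 2 * n + 3 := by linarith
    have := (by exact_mod_cast this : (3 : ℤ) * c < 2 * n + 3)
    omega
  set K : ℕ := c.toNat with hK
  have hcK : (K : ℤ) = c := Int.toNat_of_nonneg hcpos.le
  have hKn : K ≤ n := by
    have : (K : ℤ) ≤ n := by omega
    exact_mod_cast this
  have hK1 : 1 ≤ K := by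
    have : (1 : ℤ) ≤ K := by omega
    exact_mod_cast this
  apply Nat.div_le_div_right
  rcases Nat.eq_zero_or_pos m with rfl | hm1
  · simp
  · have key : ((n : ℤ) - m) * m * (m - 1) ≤ ((n : ℤ) - K) * K * (K - 1) := by
      have hm1' : (1 : ℤ) ≤ m := by exact_mod_cast hm1
      have hm' : (m : ℤ) ≤ n := by exact_mod_cast hm
      rw [hcK]
      rcases le_total (m : ℤ) c with hmc | hmc
      · nlinarith [mul_nonneg (mul_nonneg (by linarith : (0:ℤ) ≤ c - m) (by linarith : (0:ℤ) ≤ 2 * n + 2 - 3 * c)) (by linarith : (0:ℤ) ≤ c + m - 1),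
          mul_nonneg (aux_sq (c - m) (by linarith)) (by linarith : (0:ℤ) ≤ c + 2 * m - 2)]
      · nlinarith [mul_nonneg (mul_nonneg (by linarith : (0:ℤ) ≤ m - c) (by linarith : (0:ℤ) ≤ 3 * c - 2 * n)) (by linarith : (0:ℤ) ≤ c + m - 1),
          mul_nonneg (aux_sq (m - c) (by linarith)) (by linarith : (0:ℤ) ≤ c + 2 * m),
          mul_nonneg (by linarith : (0:ℤ) ≤ c) (by linarith : (0:ℤ) ≤ m - c)]
    zify [hKn, hK1, hm, hm1] at *
    linarith
end

section
/- Let A(d,n) be a set of sequences of d distinct elements of an n-set satisfying Property U. Then no two distinct sequences in A(d,n) have the same underlying set of d elements. -/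
/-- Property U for a family of `d`-sequences (maps `Fin d → S`):
(1) if an end-segment (the set of the first `j` or the last `j` elements, `1 ≤ j < d`)
of `w` has all its elements appearing in `x`, then it is an end-segment of `x`
with the elements in the same order (possibly at the other end, reversed);
(2) a sequence and its reversal are not both in the family (unless `d = 1`). -/
def PropertyU {S : Type*} {d : ℕ} (A : Set (Fin d → S)) : Prop :=
  (∀ w ∈ A, ∀ x ∈ A, ∀ j : ℕ, 1 ≤ j → j < d →
    ((∀ i : Fin d, (i : ℕ) < j → ∃ k : Fin d, x k = w i) →
      ((∀ i : Fin d, (i : ℕ) < j → x i = w i) ∨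
       (∀ i : Fin d, (i : ℕ) < j → x (Fin.rev i) = w i))) ∧
    ((∀ i : Fin d, d - j ≤ (i : ℕ) → ∃ k : Fin d, x k = w i) →
      ((∀ i : Fin d, d - j ≤ (i : ℕ) → x i = w i) ∨
       (∀ i : Fin d, d - j ≤ (i : ℕ) → x (Fin.rev i) = w i)))) ∧
  (2 ≤ d → ∀ w ∈ A, (w ∘ Fin.rev) ∉ A)

/-- in a family of injective `d`-sequences with Property U,
no two distinct sequences have the same underlying set of elements. -/
theorem stmt7 {S : Type*} {d n : ℕ} [Fintype S] (hS : Fintype.card S = n)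
    (A : Set (Fin d → S)) (hinj : ∀ w ∈ A, Function.Injective w)
    (hU : PropertyU A) :
    ∀ w ∈ A, ∀ x ∈ A, Set.range w = Set.range x → w = x := by
  -- auxiliary: if injective w, x have the same range and agree off i0, they agree at i0
  have aux : ∀ (w x : Fin d → S), Function.Injective w → Function.Injective x →
      Set.range w = Set.range x → ∀ i0 : Fin d, (∀ i, i ≠ i0 → x i = w i) → x i0 = w i0 := by
    intro w x hw hx hr i0 h
    have : x i0 ∈ Set.range w := by rw [hr]; exact Set.mem_range_self i0
    obtain ⟨k, hk⟩ := this
    by_cases hki : k = i0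
    · rw [hki] at hk; exact hk.symm
    · exfalso
      have : x k = x i0 := by rw [h k hki, hk]
      exact hki (hx this)
  intro w hw x hx hr
  match d with
  | 0 => funext i; exact i.elim0
  | 1 =>
      funext i
      have : w i ∈ Set.range x := by rw [← hr]; exact Set.mem_range_self i
      obtain ⟨k, hk⟩ := this
      have hik : i = k := Subsingleton.elim i k
      rw [hik] at hk ⊢; exact hk.symm
  | (m + 2) =>
      have h1 : (1 : ℕ) ≤ m + 1 := by omega
      have h2 : m + 1 < m + 2 := by omega
      have hmem : ∀ i : Fin (m+2), (i : ℕ) < m + 1 → ∃ k : Fin (m+2), x k = w i := by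
        intro i _
        have : w i ∈ Set.range x := by rw [← hr]; exact Set.mem_range_self i
        obtain ⟨k, hk⟩ := this
        exact ⟨k, hk⟩
      rcases ((hU.1 w hw x hx (m+1) h1 h2).1 hmem) with h | h
      · -- x agrees with w on first m+1 positions; last position by aux
        have hlast : x (Fin.last (m+1)) = w (Fin.last (m+1)) := by
          apply aux w x (hinj w hw) (hinj x hx) hr
          intro i hi
          apply h
          have : (i : ℕ) ≠ m + 1 := by
            intro hc
            exact hi (Fin.ext hc)
          omega
        funext i
        by_cases hi : i = Fin.last (m+1)
        · rw [hi]; exact hlast.symm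
        · symm; apply h
          have : (i : ℕ) ≠ m + 1 := fun hc => hi (Fin.ext hc)
          omega
      · -- x is the reversal of w: contradiction with Property U (2)
        exfalso
        have hrev : ∀ k : Fin (m+2), k ≠ 0 → x k = (w ∘ Fin.rev) k := by
          intro k hk
          have hkr : (Fin.rev k : ℕ) < m + 1 := by
            have : (k : ℕ) ≠ 0 := fun hc => hk (Fin.ext hc)
            simp [Fin.rev]
            omega
          have := h (Fin.rev k) hkr
          rwa [Fin.rev_rev] at this
        have hinjrev : Function.Injective (w ∘ Fin.rev) :=
          (hinj w hw).comp Fin.rev_injective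
        have hrrange : Set.range (w ∘ Fin.rev) = Set.range x := by
          rw [← hr, Set.range_comp, Fin.rev_surjective.range_eq, Set.image_univ]
        have h0 : x 0 = (w ∘ Fin.rev) 0 :=
          aux (w ∘ Fin.rev) x hinjrev (hinj x hx) hrrange 0 hrev
        have hxw : x = w ∘ Fin.rev := by
          funext k
          by_cases hk : k = 0
          · rw [hk]; exact h0
          · exact hrev k hk
        exact hU.2 (by omega) w hw (hxw ▸ hx)
end

section
/- Let A(3,n) be a set of injective 3-sequences over an n-set with Property U. Then |A(3,n)| ≤ max over 0 ≤ m ≤ n of (n−m)·m·(m−1)/2; consequently |A(3,n)| ≤ (2n/3)^2·(n/3)/2 + O(n^2). -/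
open scoped Classical

/-- a family of injective 3-sequences over an `n`-set with Property U
has size at most `max_{0 ≤ m ≤ n} (n−m)·m·(m−1)/2`. -/
theorem stmt8 (n : ℕ) (A : Finset (Fin 3 → Fin n))
    (hinj : ∀ w ∈ A, Function.Injective w)
    (hU : PropertyU (A : Set (Fin 3 → Fin n))) :
    A.card ≤ (Finset.range (n + 1)).sup (fun m => (n - m) * m * (m - 1) / 2) := by
  classical
  set M : Finset (Fin n) := A.image (fun w => w 1) with hMdef
  set E : Finset (Fin n) := A.image (fun w => w 0) ∪ A.image (fun w => w 2) with hEdef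
  -- Key fact: a middle element of one sequence is never an end element of another.
  have key : ∀ w ∈ A, ∀ x ∈ A, x 1 ≠ w 0 ∧ x 1 ≠ w 2 := by
    intro w hw x hx
    have hxinj := hinj x hx
    obtain ⟨hpre, hsuf⟩ := hU.1 w hw x hx 1 le_rfl (by norm_num)
    constructor
    · intro heq
      have h := hpre (by
        intro i hi
        have : i = 0 := Fin.ext (by omega)
        subst this
        exact ⟨1, heq⟩)
      rcases h with h | h
      · have h0 := h 0 (by norm_num)
        exact absurd (hxinj (heq.trans h0.symm)) (by decide)
      · have h0 := h 0 (by norm_num)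
        have : Fin.rev (0 : Fin 3) = 2 := by decide
        rw [this] at h0
        exact absurd (hxinj (heq.trans h0.symm)) (by decide)
    · intro heq
      have h := hsuf (by
        intro i hi
        have : i = 2 := Fin.ext (by omega)
        subst this
        exact ⟨1, heq⟩)
      rcases h with h | h
      · have h2 := h 2 (by norm_num)
        exact absurd (hxinj (heq.trans h2.symm)) (by decide)
      · have h2 := h 2 (by norm_num)
        have : Fin.rev (2 : Fin 3) = 0 := by decide
        rw [this] at h2
        exact absurd (hxinj (heq.trans h2.symm)) (by decide)
  -- M and E are disjoint
  have hdisj : Disjoint M E := by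
    rw [Finset.disjoint_left]
    intro a haM haE
    obtain ⟨x, hx, hxa⟩ := Finset.mem_image.mp haM
    rcases Finset.mem_union.mp haE with hE0 | hE2
    · obtain ⟨w, hw, hwa⟩ := Finset.mem_image.mp hE0
      exact (key w hw x hx).1 (hxa.trans hwa.symm)
    · obtain ⟨w, hw, hwa⟩ := Finset.mem_image.mp hE2
      exact (key w hw x hx).2 (hxa.trans hwa.symm)
  -- The injective map
  have hcard : A.card ≤ (M ×ˢ E.powersetCard 2).card := by
    apply Finset.card_le_card_of_injOn (fun w => (w 1, ({w 0, w 2} : Finset (Fin n))))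
    · intro w hw
      rw [Finset.mem_coe, Finset.mem_product]
      constructor
      · exact Finset.mem_image.mpr ⟨w, hw, rfl⟩
      · rw [Finset.mem_powersetCard]
        constructor
        · intro a ha
          rcases Finset.mem_insert.mp ha with h | h
          · exact Finset.mem_union_left _ (Finset.mem_image.mpr ⟨w, hw, h.symm⟩)
          · have := Finset.mem_singleton.mp h
            exact Finset.mem_union_right _ (Finset.mem_image.mpr ⟨w, hw, this.symm⟩)
        · rw [Finset.card_insert_of_notMem, Finset.card_singleton]
          rw [Finset.mem_singleton]
          intro h
          exact absurd (hinj w hw h) (by decide)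
    · intro w hw x hx heq
      simp only [Prod.mk.injEq] at heq
      obtain ⟨h1, hset⟩ := heq
      have h02 : (w 0 = x 0 ∧ w 2 = x 2) ∨ (w 0 = x 2 ∧ w 2 = x 0) := by
        have hw0 : w 0 ∈ ({x 0, x 2} : Finset (Fin n)) := hset ▸ Finset.mem_insert_self _ _
        have hw2 : w 2 ∈ ({x 0, x 2} : Finset (Fin n)) := hset ▸ (by
          exact Finset.mem_insert.mpr (Or.inr (Finset.mem_singleton_self _)))
        simp only [Finset.mem_insert, Finset.mem_singleton] at hw0 hw2
        have hne : w 0 ≠ w 2 := fun h => absurd (hinj w hw h) (by decide)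
        rcases hw0 with h0 | h0 <;> rcases hw2 with h2 | h2
        · exact absurd (h0.trans h2.symm) hne
        · exact Or.inl ⟨h0, h2⟩
        · exact Or.inr ⟨h0, h2⟩
        · exact absurd (h0.trans h2.symm) hne
      rcases h02 with ⟨h0, h2⟩ | ⟨h0, h2⟩
      · funext i
        fin_cases i
        · exact h0
        · exact h1
        · exact h2
      · exfalso
        apply hU.2 (by norm_num) w hw
        have : (w ∘ Fin.rev) = x := by
          funext i
          fin_cases i
          · show w (Fin.rev 0) = x 0
            rw [show Fin.rev (0 : Fin 3) = 2 from by decide]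
            exact h2
          · show w (Fin.rev 1) = x 1
            rw [show Fin.rev (1 : Fin 3) = 1 from by decide]
            exact h1
          · show w (Fin.rev 2) = x 2
            rw [show Fin.rev (2 : Fin 3) = 0 from by decide]
            exact h0
        rw [this]
        exact_mod_cast hx
  -- count
  have hMcard : M.card ≤ n - E.card := by
    have hsub : M ⊆ Finset.univ \ E := by
      intro a ha
      rw [Finset.mem_sdiff]
      exact ⟨Finset.mem_univ _, fun hE => (Finset.disjoint_left.mp hdisj) ha hE⟩
    calc M.card ≤ (Finset.univ \ E).card := Finset.card_le_card hsub
      _ = n - E.card := by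
        rw [Finset.card_sdiff_of_subset (Finset.subset_univ _), Finset.card_univ, Fintype.card_fin]
  have hEn : E.card ≤ n := by
    have := Finset.card_le_card (Finset.subset_univ E)
    simpa using this
  calc A.card ≤ (M ×ˢ E.powersetCard 2).card := hcard
    _ = M.card * (E.card.choose 2) := by
        rw [Finset.card_product, Finset.card_powersetCard]
    _ ≤ (n - E.card) * (E.card.choose 2) := Nat.mul_le_mul_right _ hMcard
    _ = (n - E.card) * E.card * (E.card - 1) / 2 := by
        have hdvd : 2 ∣ E.card * (E.card - 1) := by
          rcases Nat.even_or_odd E.card with h | h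
          · exact h.two_dvd.mul_right _
          · rcases Nat.eq_zero_or_pos E.card with h0 | h0
            · simp [h0]
            · have : Even (E.card - 1) := by
                rcases h with ⟨k, hk⟩
                exact ⟨k, by omega⟩
              exact this.two_dvd.mul_left _
        rw [Nat.choose_two_right, ← Nat.mul_div_assoc _ hdvd, mul_assoc]
    _ ≤ (Finset.range (n + 1)).sup (fun m => (n - m) * m * (m - 1) / 2) :=
        Finset.le_sup (f := fun m => (n - m) * m * (m - 1) / 2)
          (Finset.mem_range.mpr (Nat.lt_succ_of_le hEn))
end

section
/- Let R(3,n) be a family of 3-bisequences over an n-set with Property V, and suppose {bxy; ∅} and {bxz; ∅} are both in R(3,n) (where b, x, y, z are distinct elements). Then {byz; ∅} is not in R(3,n). -/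
/-- Property V for a family of bisequences, each represented as a pair of lists:
(1) any nonempty initial segment (a prefix of either of `w`'s two sequences) whose
elements all appear among the elements of `x` must be a prefix of one of `x`'s
sequences (with the same order);
(2) a bisequence and its reversal (swapping the two sequences) are not both in the family. -/
def PropertyV {S : Type*} (R : Set (List S × List S)) : Prop :=
  (∀ w ∈ R, ∀ x ∈ R, ∀ L : List S, L ≠ [] → (L <+: w.1 ∨ L <+: w.2) →
    (∀ a ∈ L, a ∈ x.1 ++ x.2) → (L <+: x.1 ∨ L <+: x.2)) ∧
  (∀ w ∈ R, (w.2, w.1) ∉ R)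

/-- in a family of 3-bisequences with Property V, if `{bxy;∅}` and
`{bxz;∅}` are both in the family, then `{byz;∅}` is not. -/
theorem stmt9 {S : Type*} {n : ℕ} [Fintype S] (hS : Fintype.card S = n)
    (R : Set (List S × List S))
    (hwf : ∀ w ∈ R, (w.1 ++ w.2).length = 3 ∧ (w.1 ++ w.2).Nodup)
    (hV : PropertyV R)
    (b x y z : S) (hbx : b ≠ x) (hby : b ≠ y) (hbz : b ≠ z)
    (hxy : x ≠ y) (hxz : x ≠ z) (hyz : y ≠ z)
    (h1 : ([b, x, y], ([] : List S)) ∈ R)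
    (h2 : ([b, x, z], ([] : List S)) ∈ R) :
    ([b, y, z], ([] : List S)) ∉ R := by
  intro h3
  have := hV.1 _ h3 _ h1 [b, y] (by simp) (Or.inl ⟨[z], rfl⟩) (by simp)
  rcases this with h | h
  · rcases h with ⟨t, ht⟩
    simp at ht
    exact hxy ht.1.symm
  · rcases h with ⟨t, ht⟩
    simp at ht
end

section
/- Let R(3,n) be a family of 3-bisequences over an n-set with Property V, and suppose {bx; c} and {bx; d} are both in R(3,n) (b, c, d, x distinct). Then {dx; c} is not in R(3,n). -/
/-- in a family of 3-bisequences with Property V, if `{bx;c}` and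
`{bx;d}` are both in the family, then `{dx;c}` is not. -/
theorem stmt10 {S : Type*} {n : ℕ} [Fintype S] (hS : Fintype.card S = n)
    (R : Set (List S × List S))
    (hwf : ∀ w ∈ R, (w.1 ++ w.2).length = 3 ∧ (w.1 ++ w.2).Nodup)
    (hV : PropertyV R)
    (b c d x : S) (hbc : b ≠ c) (hbd : b ≠ d) (hbx : b ≠ x)
    (hcd : c ≠ d) (hcx : c ≠ x) (hdx : d ≠ x)
    (h1 : ([b, x], [c]) ∈ R) (h2 : ([b, x], [d]) ∈ R) :
    ([d, x], [c]) ∉ R := by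
  intro h3
  obtain ⟨hV1, _⟩ := hV
  have := hV1 _ h3 _ h2 [d, x] (by simp) (Or.inl (List.prefix_refl _)) (by simp)
  rcases this with h | h
  · rcases h with ⟨t, ht⟩
    simp at ht
    exact hbd ht.1.symm
  · have := h.length_le
    simp at this
end

section
/- Fix a vertex b and a triangle-free condition: let R(3,n) be a family of 3-bisequences over an n-set with Property V, let A be the set of elements appearing as first element of some sequence in a bisequence of R(3,n), and W its complement, with |A| = a, |W| = w. For each e ∈ A, the graph G_e on vertex set W whose edges are pairs [x,y] such that {eyx; ∅} or {exy; ∅} or a reversal is in R(3,n), is triangle-free. -/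
/-- let `A` be the set of elements appearing as the first element of some
sequence of a bisequence in a family `R` of 3-bisequences with Property V, and `W = Aᶜ`.
For each `e ∈ A`, the graph `G_e` on `W` whose edges are the pairs `[x,y]` with
`{eyx;∅}` or `{exy;∅}` or one of their reversals in `R` is triangle-free. -/
theorem stmt11 {S : Type*} {n : ℕ} [Fintype S] (hS : Fintype.card S = n)
    (R : Set (List S × List S))
    (hwf : ∀ w ∈ R, (w.1 ++ w.2).length = 3 ∧ (w.1 ++ w.2).Nodup)
    (hV : PropertyV R)
    (A : Set S) (hA : A = {s | ∃ w ∈ R, w.1.head? = some s ∨ w.2.head? = some s})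
    (e : S) (he : e ∈ A) :
    (SimpleGraph.fromRel (fun x y : S =>
      x ∉ A ∧ y ∉ A ∧
        ((([e, y, x], ([] : List S)) ∈ R ∨ (([] : List S), [e, y, x]) ∈ R) ∨
         (([e, x, y], ([] : List S)) ∈ R ∨ (([] : List S), [e, x, y]) ∈ R)))).CliqueFree 3 := by
  have step : ∀ a b a' b' : S,
      (([e, a, b], ([] : List S)) ∈ R ∨ (([] : List S), [e, a, b]) ∈ R) →
      (([e, a', b'], ([] : List S)) ∈ R ∨ (([] : List S), [e, a', b']) ∈ R) →
      (a = a' ∨ a = b') → a = a' := by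
    intro a b a' b' h1 h2 hmem
    have key : ∀ w ∈ R, ∀ x ∈ R, ∀ L : List S, L ≠ [] → (L <+: w.1 ∨ L <+: w.2) →
        (∀ c ∈ L, c ∈ x.1 ++ x.2) → (L <+: x.1 ∨ L <+: x.2) := hV.1
    have hmem' : ∀ (p q : List S × List S), p = ([e, a, b], ([] : List S)) ∨
        p = (([] : List S), [e, a, b]) → q = ([e, a', b'], ([] : List S)) ∨
        q = (([] : List S), [e, a', b']) → p ∈ R → q ∈ R → a = a' := by
      intro p q hp hq hpR hqR
      have hpre : [e, a] <+: p.1 ∨ [e, a] <+: p.2 := by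
        rcases hp with rfl | rfl
        · exact Or.inl ⟨[b], rfl⟩
        · exact Or.inr ⟨[b], rfl⟩
      have hall : ∀ c ∈ ([e, a] : List S), c ∈ q.1 ++ q.2 := by
        intro c hc
        rcases hq with rfl | rfl <;> simp at hc ⊢ <;>
          rcases hc with rfl | rfl <;> tauto
      have hres := key p hpR q hqR [e, a] (by simp) hpre hall
      rcases hq with rfl | rfl
      · rcases hres with hres | hres
        · obtain ⟨t, ht⟩ := hres
          simp at ht
          exact ht.1
        · exact absurd (List.prefix_nil.mp hres) (by simp)
      · rcases hres with hres | hres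
        · exact absurd (List.prefix_nil.mp hres) (by simp)
        · obtain ⟨t, ht⟩ := hres
          simp at ht
          exact ht.1
    rcases h1 with h1 | h1 <;> rcases h2 with h2 | h2
    · exact hmem' _ _ (Or.inl rfl) (Or.inl rfl) h1 h2
    · exact hmem' _ _ (Or.inl rfl) (Or.inr rfl) h1 h2
    · exact hmem' _ _ (Or.inr rfl) (Or.inl rfl) h1 h2
    · exact hmem' _ _ (Or.inr rfl) (Or.inr rfl) h1 h2
  classical
  intro t ht
  rw [SimpleGraph.is3Clique_iff] at ht
  obtain ⟨x, y, z, hxy, hxz, hyz, -⟩ := ht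
  rw [SimpleGraph.fromRel_adj] at hxy hxz hyz
  obtain ⟨hxyne, hxy⟩ := hxy
  obtain ⟨hxzne, hxz⟩ := hxz
  obtain ⟨hyzne, hyz⟩ := hyz
  have h1 : (([e, y, x], ([] : List S)) ∈ R ∨ (([] : List S), [e, y, x]) ∈ R) ∨
      (([e, x, y], ([] : List S)) ∈ R ∨ (([] : List S), [e, x, y]) ∈ R) := by
    rcases hxy with ⟨-, -, h⟩ | ⟨-, -, h⟩
    exacts [h, h.symm]
  have h2 : (([e, z, x], ([] : List S)) ∈ R ∨ (([] : List S), [e, z, x]) ∈ R) ∨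
      (([e, x, z], ([] : List S)) ∈ R ∨ (([] : List S), [e, x, z]) ∈ R) := by
    rcases hxz with ⟨-, -, h⟩ | ⟨-, -, h⟩
    exacts [h, h.symm]
  have h3 : (([e, z, y], ([] : List S)) ∈ R ∨ (([] : List S), [e, z, y]) ∈ R) ∨
      (([e, y, z], ([] : List S)) ∈ R ∨ (([] : List S), [e, y, z]) ∈ R) := by
    rcases hyz with ⟨-, -, h⟩ | ⟨-, -, h⟩
    exacts [h, h.symm]
  rcases h1 with h1 | h1 <;> rcases h2 with h2 | h2 <;> rcases h3 with h3 | h3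
  · exact hyzne (step y x z y h1 h3 (Or.inr rfl))
  · exact hyzne (step z x y z h2 h3 (Or.inr rfl)).symm
  · exact hyzne (step y x z y h1 h3 (Or.inr rfl))
  · exact hxyne (step x z y x h2 h1 (Or.inr rfl))
  · exact hxzne (step x y z x h1 h2 (Or.inr rfl))
  · exact hyzne (step z x y z h2 h3 (Or.inr rfl)).symm
  · exact hxzne (step z y x z h3 h2 (Or.inr rfl)).symm
  · exact hxyne (step y z x y h3 h1 (Or.inr rfl)).symm
end

section
/- Let R(3,n) be a family of 3-bisequences over an n-set with Property V. Then |R(3,n)| ≤ n^3/16. -/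
/-- Encoding of a 3-bisequence as a triple: a bisequence with one empty list and one
list `[a,x,y]` is sent to `(a,x,y)`; a bisequence with lists `[a]` and `[x,c]` is
sent to `(c,a,x)`. -/
def enc3 {α : Type*} (d : α) : List α × List α → α × α × α
  | ([], [a,x,y]) => (a,x,y)
  | ([a,x,y], []) => (a,x,y)
  | ([a],[x,c]) => (c,a,x)
  | ([x,c],[a]) => (c,a,x)
  | _ => (d,d,d)

/-- The possible shapes of a pair of lists with 3 elements in total. -/
lemma classify3 {α : Type*} (l1 l2 : List α) (h : (l1 ++ l2).length = 3) :
    (∃ a x y, l1 = [] ∧ l2 = [a,x,y]) ∨ (∃ a x y, l1 = [a,x,y] ∧ l2 = []) ∨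
    (∃ a x c, l1 = [a] ∧ l2 = [x,c]) ∨ (∃ a x c, l1 = [x,c] ∧ l2 = [a]) := by
  rcases l1 with _|⟨a,_|⟨b,_|⟨c,_|l⟩⟩⟩ <;> rcases l2 with _|⟨p,_|⟨q,_|⟨r,m⟩⟩⟩ <;>
    simp_all

/-- a family of 3-bisequences over an `n`-set with Property V has
size at most `n³/16`. -/
theorem stmt13 (n : ℕ) (R : Finset (List (Fin n) × List (Fin n)))
    (hwf : ∀ w ∈ R, (w.1 ++ w.2).length = 3 ∧ (w.1 ++ w.2).Nodup)
    (hV : PropertyV (R : Set (List (Fin n) × List (Fin n)))) :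
    16 * R.card ≤ n ^ 3 := by
  classical
  rcases R.eq_empty_or_nonempty with rfl | ⟨w0, hw0⟩
  · simp
  -- the ground type is nonempty
  have hn : 0 < n := by
    obtain ⟨h3, -⟩ := hwf w0 hw0
    rcases h : (w0.1 ++ w0.2) with _ | ⟨e, l⟩
    · rw [h] at h3; simp at h3
    · exact lt_of_le_of_lt (Nat.zero_le _) e.isLt
  set d : Fin n := ⟨0, hn⟩ with hd
  have hP := hV.1
  have hS := hV.2
  -- A : the elements appearing as first element of a sequence
  obtain ⟨A, memA⟩ : ∃ A : Finset (Fin n), ∀ e : Fin n,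
      e ∈ A ↔ ∃ w ∈ R, (∃ t, w.1 = e :: t) ∨ (∃ t, w.2 = e :: t) :=
    ⟨Finset.univ.filter (fun e => ∃ w ∈ R, (∃ t, w.1 = e :: t) ∨ (∃ t, w.2 = e :: t)),
      by intro e; simp⟩
  -- an element of A appears only as a first element
  have hAhead : ∀ e ∈ A, ∀ x ∈ R, e ∈ x.1 ++ x.2 →
      (∃ t, x.1 = e :: t) ∨ (∃ t, x.2 = e :: t) := by
    intro e he x hx hmem
    obtain ⟨w, hw, hor⟩ := (memA e).1 he
    have hpre : [e] <+: w.1 ∨ [e] <+: w.2 := by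
      rcases hor with ⟨t, ht⟩ | ⟨t, ht⟩
      · exact Or.inl (by rw [ht]; exact ⟨t, rfl⟩)
      · exact Or.inr (by rw [ht]; exact ⟨t, rfl⟩)
    have := hP w hw x hx [e] (by simp) hpre (by simpa using hmem)
    rcases this with ⟨t, ht⟩ | ⟨t, ht⟩
    · exact Or.inl ⟨t, ht.symm⟩
    · exact Or.inr ⟨t, ht.symm⟩
  -- structure theorem for members of R
  have key : ∀ w ∈ R, ∃ p q r : Fin n, enc3 d w = (p, q, r) ∧
      ((w = ([],[p,q,r]) ∨ w = ([p,q,r],[])) ∧ p ∈ A ∧ q ∉ A ∧ r ∉ A ∨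
       (w = ([q],[r,p]) ∨ w = ([r,p],[q])) ∧ p ∉ A ∧ q ∈ A ∧ r ∈ A) := by
    intro w hw
    obtain ⟨h3, hnd⟩ := hwf w hw
    obtain ⟨l1, l2⟩ := w
    rcases classify3 l1 l2 h3 with ⟨a,x,y,h1,h2⟩|⟨a,x,y,h1,h2⟩|⟨a,x,c,h1,h2⟩|⟨a,x,c,h1,h2⟩ <;>
        subst h1 <;> subst h2 <;>
        simp only [List.nil_append, List.append_nil, List.cons_append, List.singleton_append,
          List.nodup_cons, List.mem_cons, List.mem_singleton, List.not_mem_nil,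
          List.nodup_nil, and_true, not_or] at hnd
    · refine ⟨a, x, y, rfl, Or.inl ⟨Or.inl rfl, ?_, ?_, ?_⟩⟩
      · exact (memA a).2 ⟨_, hw, Or.inr ⟨[x,y], rfl⟩⟩
      · intro hx'
        rcases hAhead x hx' _ hw (by simp) with ⟨t, ht⟩ | ⟨t, ht⟩
        · exact (List.cons_ne_nil _ _) ht.symm
        · simp only [List.cons.injEq] at ht
          exact hnd.1.1 ht.1
      · intro hy'
        rcases hAhead y hy' _ hw (by simp) with ⟨t, ht⟩ | ⟨t, ht⟩
        · exact (List.cons_ne_nil _ _) ht.symm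
        · simp only [List.cons.injEq] at ht
          exact hnd.1.2.1 ht.1
    · refine ⟨a, x, y, rfl, Or.inl ⟨Or.inr rfl, ?_, ?_, ?_⟩⟩
      · exact (memA a).2 ⟨_, hw, Or.inl ⟨[x,y], rfl⟩⟩
      · intro hx'
        rcases hAhead x hx' _ hw (by simp) with ⟨t, ht⟩ | ⟨t, ht⟩
        · simp only [List.cons.injEq] at ht
          exact hnd.1.1 ht.1
        · exact (List.cons_ne_nil _ _) ht.symm
      · intro hy'
        rcases hAhead y hy' _ hw (by simp) with ⟨t, ht⟩ | ⟨t, ht⟩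
        · simp only [List.cons.injEq] at ht
          exact hnd.1.2.1 ht.1
        · exact (List.cons_ne_nil _ _) ht.symm
    · refine ⟨c, a, x, rfl, Or.inr ⟨Or.inl rfl, ?_, ?_, ?_⟩⟩
      · intro hc'
        rcases hAhead c hc' _ hw (by simp) with ⟨t, ht⟩ | ⟨t, ht⟩
        · simp only [List.cons.injEq] at ht
          exact hnd.1.2.1 ht.1
        · simp only [List.cons.injEq] at ht
          exact hnd.2.1.1 ht.1
      · exact (memA a).2 ⟨_, hw, Or.inl ⟨[], rfl⟩⟩
      · exact (memA x).2 ⟨_, hw, Or.inr ⟨[c], rfl⟩⟩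
    · refine ⟨c, a, x, rfl, Or.inr ⟨Or.inr rfl, ?_, ?_, ?_⟩⟩
      · intro hc'
        rcases hAhead c hc' _ hw (by simp) with ⟨t, ht⟩ | ⟨t, ht⟩
        · simp only [List.cons.injEq] at ht
          exact hnd.1.1 ht.1
        · simp only [List.cons.injEq] at ht
          exact hnd.2.1.1 ht.1.symm
      · exact (memA a).2 ⟨_, hw, Or.inr ⟨[], rfl⟩⟩
      · exact (memA x).2 ⟨_, hw, Or.inl ⟨[c], rfl⟩⟩
  have key' : ∀ w ∈ R, ∀ p q r : Fin n, enc3 d w = (p, q, r) →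
      ((w = ([],[p,q,r]) ∨ w = ([p,q,r],[])) ∧ p ∈ A ∧ q ∉ A ∧ r ∉ A ∨
       (w = ([q],[r,p]) ∨ w = ([r,p],[q])) ∧ p ∉ A ∧ q ∈ A ∧ r ∈ A) := by
    intro w hw p q r he
    obtain ⟨p', q', r', he', hc⟩ := key w hw
    rw [he] at he'
    obtain ⟨rfl, rfl, rfl⟩ : p = p' ∧ q = q' ∧ r = r' := by
      simpa [Prod.ext_iff] using he'
    exact hc
  -- the encoding is injective on R
  have hinj : Set.InjOn (enc3 d) R := by
    intro w hw x hx hwx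
    obtain ⟨p, q, r, hwe, hwc⟩ := key w hw
    have hxc := key' x hx p q r (by rw [← hwx, hwe])
    rcases hwc with ⟨hw1, hpA, -, -⟩ | ⟨hw1, hpA, -, -⟩ <;>
      rcases hxc with ⟨hx1, hpA', -, -⟩ | ⟨hx1, hpA', -, -⟩
    · rcases hw1 with rfl | rfl <;> rcases hx1 with rfl | rfl
      · rfl
      · exact absurd hx (hS _ hw)
      · exact absurd hw (hS _ hx)
      · rfl
    · exact absurd hpA hpA'
    · exact absurd hpA' hpA
    · rcases hw1 with rfl | rfl <;> rcases hx1 with rfl | rfl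
      · rfl
      · exact absurd hx (hS _ hw)
      · exact absurd hw (hS _ hx)
      · rfl
  set T : Finset (Fin n × Fin n × Fin n) := R.image (enc3 d) with hT
  have hcardT : T.card = R.card := Finset.card_image_of_injOn hinj
  have fibsum : T.card = ∑ e : Fin n, (T.filter (fun z => z.1 = e)).card :=
    Finset.card_eq_sum_card_fiberwise (fun z _ => Finset.mem_univ z.1)
  -- the fiberwise bound
  have bound : ∀ e : Fin n,
      16 * (T.filter (fun z => z.1 = e)).card ≤
        if e ∈ A then 4 * Aᶜ.card ^ 2 else 4 * A.card ^ 2 := by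
    intro e
    set F := T.filter (fun z => z.1 = e) with hF
    set P := F.image (fun z => z.2.1) with hPdef
    set Q := F.image (fun z => z.2.2) with hQdef
    have hPmem : ∀ u ∈ P, ∃ w ∈ R, ∃ y, enc3 d w = (e, u, y) := by
      intro u hu
      obtain ⟨z, hz, hzu⟩ := Finset.mem_image.1 hu
      obtain ⟨z1, z2, z3⟩ := z
      obtain ⟨hzT, hze⟩ := Finset.mem_filter.1 hz
      obtain ⟨w, hw, hwz⟩ := Finset.mem_image.1 hzT
      simp only at hze hzu
      subst hze; subst hzu
      exact ⟨w, hw, z3, hwz⟩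
    have hQmem : ∀ u ∈ Q, ∃ w ∈ R, ∃ y, enc3 d w = (e, y, u) := by
      intro u hu
      obtain ⟨z, hz, hzu⟩ := Finset.mem_image.1 hu
      obtain ⟨z1, z2, z3⟩ := z
      obtain ⟨hzT, hze⟩ := Finset.mem_filter.1 hz
      obtain ⟨w, hw, hwz⟩ := Finset.mem_image.1 hzT
      simp only at hze hzu
      subst hze; subst hzu
      exact ⟨w, hw, z2, hwz⟩
    have hPA : ∀ u ∈ P, (e ∈ A → u ∉ A) ∧ (e ∉ A → u ∈ A) := by
      intro u hu
      obtain ⟨w, hw, y, hwe⟩ := hPmem u hu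
      rcases key' w hw _ _ _ hwe with ⟨-, hp, hq, -⟩ | ⟨-, hp, hq, -⟩
      · exact ⟨fun _ => hq, fun he' => absurd hp he'⟩
      · exact ⟨fun he' => absurd he' hp, fun _ => hq⟩
    have hQA : ∀ u ∈ Q, (e ∈ A → u ∉ A) ∧ (e ∉ A → u ∈ A) := by
      intro u hu
      obtain ⟨w, hw, y, hwe⟩ := hQmem u hu
      rcases key' w hw _ _ _ hwe with ⟨-, hp, -, hq⟩ | ⟨-, hp, -, hq⟩
      · exact ⟨fun _ => hq, fun he' => absurd hp he'⟩
      · exact ⟨fun he' => absurd he' hp, fun _ => hq⟩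
    have hdisj : Disjoint P Q := by
      rw [Finset.disjoint_left]
      intro u huP huQ
      obtain ⟨w, hw, y, hwe⟩ := hPmem u huP
      obtain ⟨x, hx, v, hxe⟩ := hQmem u huQ
      by_cases he : e ∈ A
      · rcases key' w hw _ _ _ hwe with ⟨hw1, -, -, -⟩ | ⟨-, hp, -, -⟩
        swap
        · exact hp he
        rcases key' x hx _ _ _ hxe with ⟨hx1, -, -, -⟩ | ⟨-, hp, -, -⟩
        swap
        · exact hp he
        obtain ⟨-, hndx⟩ := hwf x hx
        have hpre : [e, u] <+: w.1 ∨ [e, u] <+: w.2 := by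
          rcases hw1 with rfl | rfl
          · exact Or.inr ⟨[y], rfl⟩
          · exact Or.inl ⟨[y], rfl⟩
        have hmem : ∀ a ∈ [e, u], a ∈ x.1 ++ x.2 := by
          rcases hx1 with rfl | rfl <;> intro a ha <;> simp at ha ⊢ <;> tauto
        rcases hP w hw x hx [e,u] (by simp) hpre hmem with h | h <;>
            rcases hx1 with rfl | rfl <;> obtain ⟨t, ht⟩ := h <;> simp at ht <;>
          first
            | exact ht
            | (obtain ⟨rfl, -⟩ := ht; simp at hndx)
      · rcases key' w hw _ _ _ hwe with ⟨-, hp, -, -⟩ | ⟨hw1, -, -, -⟩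
        · exact he hp
        rcases key' x hx _ _ _ hxe with ⟨-, hp, -, -⟩ | ⟨hx1, -, -, -⟩
        · exact he hp
        obtain ⟨-, hndw⟩ := hwf w hw
        have hpre : [u, e] <+: x.1 ∨ [u, e] <+: x.2 := by
          rcases hx1 with rfl | rfl
          · exact Or.inr ⟨[], rfl⟩
          · exact Or.inl ⟨[], rfl⟩
        have hmem : ∀ a ∈ [u, e], a ∈ w.1 ++ w.2 := by
          rcases hw1 with rfl | rfl <;> intro a ha <;> simp at ha ⊢ <;> tauto
        rcases hP x hx w hw [u,e] (by simp) hpre hmem with h | h <;>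
            rcases hw1 with rfl | rfl <;> obtain ⟨t, ht⟩ := h <;> simp at ht <;>
          first
            | exact ht
            | (obtain ⟨rfl, -⟩ := ht; simp at hndw)
    have fib_le : F.card ≤ P.card * Q.card := by
      rw [← Finset.card_product]
      apply Finset.card_le_card_of_injOn (fun z => (z.2.1, z.2.2))
      · intro z hz
        exact Finset.mem_product.2 ⟨Finset.mem_image_of_mem _ hz, Finset.mem_image_of_mem _ hz⟩
      · intro z hz z' hz' hzz
        have h1 : z.1 = e := (Finset.mem_filter.1 hz).2
        have h2 : z'.1 = e := (Finset.mem_filter.1 hz').2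
        simp only [Prod.mk.injEq] at hzz
        obtain ⟨z1, z2, z3⟩ := z
        obtain ⟨z1', z2', z3'⟩ := z'
        simp only at h1 h2 hzz
        simp [h1, h2, hzz.1, hzz.2]
    by_cases he : e ∈ A
    · simp only [he, if_true]
      have hPW : P ⊆ Aᶜ := fun u hu => Finset.mem_compl.2 ((hPA u hu).1 he)
      have hQW : Q ⊆ Aᶜ := fun u hu => Finset.mem_compl.2 ((hQA u hu).1 he)
      have hle : P.card + Q.card ≤ Aᶜ.card := by
        rw [← Finset.card_union_of_disjoint hdisj]
        exact Finset.card_le_card (Finset.union_subset hPW hQW)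
      have h2 : (P.card + Q.card)^2 ≤ Aᶜ.card ^ 2 := Nat.pow_le_pow_left hle 2
      have h3 : 2 * P.card * Q.card ≤ P.card ^ 2 + Q.card ^ 2 := two_mul_le_add_sq _ _
      calc 16 * F.card ≤ 16 * (P.card * Q.card) := Nat.mul_le_mul_left _ fib_le
        _ ≤ 4 * Aᶜ.card ^ 2 := by nlinarith
    · simp only [he, if_false]
      have hPW : P ⊆ A := fun u hu => (hPA u hu).2 he
      have hQW : Q ⊆ A := fun u hu => (hQA u hu).2 he
      have hle : P.card + Q.card ≤ A.card := by
        rw [← Finset.card_union_of_disjoint hdisj]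
        exact Finset.card_le_card (Finset.union_subset hPW hQW)
      have h2 : (P.card + Q.card)^2 ≤ A.card ^ 2 := Nat.pow_le_pow_left hle 2
      have h3 : 2 * P.card * Q.card ≤ P.card ^ 2 + Q.card ^ 2 := two_mul_le_add_sq _ _
      calc 16 * F.card ≤ 16 * (P.card * Q.card) := Nat.mul_le_mul_left _ fib_le
        _ ≤ 4 * A.card ^ 2 := by nlinarith
  -- sum up
  have hsplit : ∑ e : Fin n, (if e ∈ A then (4 * Aᶜ.card ^ 2) else (4 * A.card ^ 2))
      = A.card * (4 * Aᶜ.card ^ 2) + Aᶜ.card * (4 * A.card ^ 2) := by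
    rw [← Finset.sum_add_sum_compl A]
    congr 1
    · rw [Finset.sum_congr rfl (fun e he => if_pos he), Finset.sum_const, smul_eq_mul]
    · rw [Finset.sum_congr rfl (fun e he => if_neg (Finset.mem_compl.1 he)),
        Finset.sum_const, smul_eq_mul]
  have hcompl : A.card + Aᶜ.card = n := by
    rw [Finset.card_add_card_compl, Fintype.card_fin]
  have h4 : 4 * (A.card * Aᶜ.card) ≤ n ^ 2 := by
    have h5 : 4 * (A.card * Aᶜ.card) ≤ (A.card + Aᶜ.card) ^ 2 := by
      nlinarith [two_mul_le_add_sq A.card Aᶜ.card]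
    rwa [hcompl] at h5
  calc 16 * R.card = 16 * T.card := by rw [hcardT]
    _ = ∑ e : Fin n, 16 * (T.filter (fun z => z.1 = e)).card := by
        rw [fibsum, Finset.mul_sum]
    _ ≤ ∑ e : Fin n, (if e ∈ A then (4 * Aᶜ.card ^ 2) else (4 * A.card ^ 2)) :=
        Finset.sum_le_sum (fun e _ => bound e)
    _ = A.card * (4 * Aᶜ.card ^ 2) + Aᶜ.card * (4 * A.card ^ 2) := hsplit
    _ = 4 * (A.card * Aᶜ.card) * (A.card + Aᶜ.card) := by ring
    _ = 4 * (A.card * Aᶜ.card) * n := by rw [hcompl]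
    _ ≤ n ^ 2 * n := Nat.mul_le_mul_right n h4
    _ = n ^ 3 := by ring
end

section
/- For every configuration H ⊆ V(Q_d) and every positive integer d, π(H,d) ≥ d!/d^d. -/
open scoped Classical

/-- The automorphism of the `d`-cube `Q_d` (vertices: `Fin d → Bool`) determined by a
coordinate permutation `π` and a translation (coordinate complementation pattern) `b`.
Every automorphism of `Q_d` is of this form. -/
def cubeAuto {d : ℕ} (π : Equiv.Perm (Fin d)) (b : Fin d → Bool) (v : Fin d → Bool) :
    Fin d → Bool :=
  fun i => xor (v (π.symm i)) (b i)

/-- `K` is an exact copy of `H` in `Q_d`: some automorphism of `Q_d` maps `H` onto `K`. -/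
def ExactCopy {d : ℕ} (H K : Set (Fin d → Bool)) : Prop :=
  ∃ (π : Equiv.Perm (Fin d)) (b : Fin d → Bool), K = cubeAuto π b '' H

/-- The configuration in `Q_d` induced on the sub-`d`-cube of `Q_n` with varying
coordinate set `D` (with `D.card = d`) and fixed values `f` outside `D`, by a set
`S ⊆ V(Q_n)`: the varying coordinates are identified with `Fin d` in increasing order. -/
def subcubeConfig {n d : ℕ} (D : Finset (Fin n)) (hD : D.card = d)
    (f : Fin n → Bool) (S : Set (Fin n → Bool)) : Set (Fin d → Bool) :=
  {x | (fun i => if h : i ∈ D then x ((D.orderIsoOfFin hD).symm ⟨i, h⟩) else f i) ∈ S}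

-- Part A : preimages under cube automorphisms are exact copies
lemma cubeAuto_left_inv {d : ℕ} (π : Equiv.Perm (Fin d)) (b : Fin d → Bool) (v : Fin d → Bool) :
    cubeAuto π b (cubeAuto π.symm (b ∘ π) v) = v := by
  funext i
  simp [cubeAuto, Bool.xor_assoc]

lemma cubeAuto_right_inv {d : ℕ} (π : Equiv.Perm (Fin d)) (b : Fin d → Bool) (v : Fin d → Bool) :
    cubeAuto π.symm (b ∘ π) (cubeAuto π b v) = v := by
  funext i
  simp [cubeAuto, Bool.xor_assoc]

lemma exactCopy_preimage {d : ℕ} (H : Set (Fin d → Bool)) (π : Equiv.Perm (Fin d))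
    (b : Fin d → Bool) : ExactCopy H (cubeAuto π b ⁻¹' H) := by
  refine ⟨π.symm, b ∘ π, ?_⟩
  exact (congrFun (Set.image_eq_preimage_of_inverse (cubeAuto_left_inv π b)
    (cubeAuto_right_inv π b)) H).symm

-- Part B : the parity construction
def b2z (a : Bool) : ZMod 2 := if a then 1 else 0
def z2b (z : ZMod 2) : Bool := decide (z = 1)

lemma z2b_b2z_add : ∀ (a : Bool) (z : ZMod 2), z2b (b2z a + z) = xor a (z2b z) := by decide

lemma b2z_z2b : ∀ z : ZMod 2, b2z (z2b z) = z := by decide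

section construction
variable (d m : ℕ)

noncomputable def cEq : Fin d × Fin m ≃ Fin (d * m) := finProdFinEquiv

/-- the parity construction set -/
def parS (H : Set (Fin d → Bool)) : Set (Fin (d * m) → Bool) :=
  {v | (fun i => z2b (∑ t : Fin m, b2z (v (cEq d m (i, t))))) ∈ H}

variable {d m}

/-- transversal determined by a choice function -/
noncomputable def trD (tb : Fin d → Fin m) : Finset (Fin (d * m)) :=
  Finset.univ.image (fun i => cEq d m (i, tb i))

lemma trD_inj_aux {tb : Fin d → Fin m} {i i' : Fin d} {t : Fin m}
    (h : cEq d m (i', tb i') = cEq d m (i, t)) : i' = i ∧ tb i' = t := by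
  have := (cEq d m).injective h
  exact ⟨congrArg Prod.fst this, congrArg Prod.snd this⟩

lemma mem_trD {tb : Fin d → Fin m} {i : Fin d} {t : Fin m} :
    cEq d m (i, t) ∈ trD tb ↔ t = tb i := by
  constructor
  · intro h
    obtain ⟨i', -, h'⟩ := Finset.mem_image.mp h
    obtain ⟨rfl, h2⟩ := trD_inj_aux h'
    exact h2.symm
  · rintro rfl
    exact Finset.mem_image.mpr ⟨i, Finset.mem_univ i, rfl⟩

lemma trD_card (tb : Fin d → Fin m) : (trD tb).card = d := by
  rw [trD, Finset.card_image_of_injective _ (fun i i' h => (trD_inj_aux h).1)]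
  simp

lemma trD_injective : Function.Injective (trD (d := d) (m := m)) := by
  intro tb tb' h
  funext i
  have : cEq d m (i, tb i) ∈ trD tb' := h ▸ mem_trD.mpr rfl
  exact mem_trD.mp this

lemma exactCopy_parS (H : Set (Fin d → Bool)) (tb : Fin d → Fin m)
    (f : Fin (d * m) → Bool) :
    ExactCopy H (subcubeConfig (trD tb) (trD_card tb) f (parS d m H)) := by
  set D := trD tb with hDdef
  set h := trD_card tb
  -- the rank function
  have hmem : ∀ i : Fin d, cEq d m (i, tb i) ∈ D := fun i => mem_trD.mpr rfl
  set ρ : Fin d → Fin d := fun i => (D.orderIsoOfFin h).symm ⟨cEq d m (i, tb i), hmem i⟩ with hρ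
  have hρinj : Function.Injective ρ := by
    intro i i' hii
    have := congrArg (fun r => ((D.orderIsoOfFin h) r : Fin (d * m))) hii
    simp only [hρ, OrderIso.apply_symm_apply] at this
    exact ((trD_inj_aux this.symm).1).symm
  have hρbij : Function.Bijective ρ := Finite.injective_iff_bijective.mp hρinj
  set π : Equiv.Perm (Fin d) := (Equiv.ofBijective ρ hρbij).symm with hπ
  set bb : Fin d → Bool :=
    fun i => z2b (∑ t ∈ Finset.univ.erase (tb i), b2z (f (cEq d m (i, t)))) with hbb
  have key : subcubeConfig D h f (parS d m H) = cubeAuto π bb ⁻¹' H := by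
    ext x
    simp only [subcubeConfig, parS, Set.mem_setOf_eq, Set.mem_preimage]
    have hfun : (fun i => z2b (∑ t : Fin m,
        b2z (if hh : cEq d m (i, t) ∈ D then x ((D.orderIsoOfFin h).symm ⟨cEq d m (i, t), hh⟩)
          else f (cEq d m (i, t))))) = cubeAuto π bb x := by
      funext i
      have hsum : (∑ t : Fin m,
          b2z (if hh : cEq d m (i, t) ∈ D then x ((D.orderIsoOfFin h).symm ⟨cEq d m (i, t), hh⟩)
            else f (cEq d m (i, t))))
          = b2z (x (ρ i)) + ∑ t ∈ Finset.univ.erase (tb i), b2z (f (cEq d m (i, t))) := by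
        rw [← Finset.add_sum_erase _ _ (Finset.mem_univ (tb i))]
        congr 1
        · rw [dif_pos (hmem i)]
        · apply Finset.sum_congr rfl
          intro t ht
          rw [dif_neg]
          intro hc
          exact (Finset.mem_erase.mp ht).1 (mem_trD.mp hc)
      rw [hsum, z2b_b2z_add]
      have : π.symm i = ρ i := rfl
      simp [cubeAuto, this, hbb]
    exact iff_of_eq (congrArg (· ∈ H) hfun)
  rw [key]
  exact exactCopy_preimage H π bb

end construction


/-- `G(H,d,n,S)`: the number of sub-`d`-cubes `R` of `Q_n` such that `S ∩ R` is an exact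
copy of `H`.  A sub-`d`-cube is encoded as a pair `(D, f)` with `D.card = d` and `f`
normalized to be `false` on `D`; there are `C(n,d)·2^(n-d)` of them. -/
noncomputable def goodCount {d : ℕ} (H : Set (Fin d → Bool)) (n : ℕ)
    (S : Set (Fin n → Bool)) : ℕ :=
  ((Finset.univ : Finset (Finset (Fin n) × (Fin n → Bool))).filter
    (fun P => ∃ h : P.1.card = d,
      (∀ i ∈ P.1, P.2 i = false) ∧ ExactCopy H (subcubeConfig P.1 h P.2 S))).card

/-- `ex(H,d,n)`: the maximum over `S ⊆ V(Q_n)` of the fraction of sub-`d`-cubes of `Q_n`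
whose intersection with `S` is an exact copy of `H`. -/
noncomputable def exDensity {d : ℕ} (H : Set (Fin d → Bool)) (n : ℕ) : ℝ :=
  (((Finset.univ : Finset (Finset (Fin n → Bool))).sup
      (fun S => goodCount H n (S : Set (Fin n → Bool))) : ℕ) : ℝ) /
    ((n.choose d : ℝ) * 2 ^ (n - d))

lemma card_falseOn {n d : ℕ} (D₀ : Finset (Fin n)) (hD : D₀.card = d) :
    (Finset.univ.filter (fun f : Fin n → Bool => ∀ i ∈ D₀, f i = false)).card
      = 2 ^ (n - d) := by
  have heq : Finset.univ.filter (fun f : Fin n → Bool => ∀ i ∈ D₀, f i = false)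
      = Fintype.piFinset (fun i => if i ∈ D₀ then ({false} : Finset Bool) else Finset.univ) := by
    ext f
    simp only [Finset.mem_filter, Finset.mem_univ, true_and, Fintype.mem_piFinset]
    constructor
    · intro hf i
      by_cases hi : i ∈ D₀
      · simp [hi, hf i hi]
      · simp [hi]
    · intro hf i hi
      have := hf i
      simpa [hi] using this
  rw [heq, Fintype.card_piFinset]
  have h1 : ∀ i : Fin n, (if i ∈ D₀ then ({false} : Finset Bool) else Finset.univ).card
      = if i ∈ D₀ then 1 else 2 := by
    intro i; by_cases hi : i ∈ D₀ <;> simp [hi]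
  calc (∏ i : Fin n, (if i ∈ D₀ then ({false} : Finset Bool) else Finset.univ).card)
      = ∏ i : Fin n, (if i ∈ D₀ then 1 else 2) := by
        exact Finset.prod_congr rfl (fun i _ => h1 i)
    _ = (∏ i ∈ D₀, (if i ∈ D₀ then 1 else 2)) * ∏ i ∈ D₀ᶜ, (if i ∈ D₀ then 1 else 2) :=
        (Finset.prod_mul_prod_compl _ _).symm
    _ = 1 * ∏ i ∈ D₀ᶜ, 2 := by
        rw [Finset.prod_congr rfl (fun i hi => if_pos hi), Finset.prod_const_one]
        congr 1
        exact Finset.prod_congr rfl (fun i hi => if_neg (Finset.mem_compl.mp hi))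
    _ = 2 ^ (n - d) := by
        rw [one_mul, Finset.prod_const, Finset.card_compl, hD, Fintype.card_fin]

lemma goodCount_parS (d m : ℕ) (H : Set (Fin d → Bool)) :
    m ^ d * 2 ^ (d * m - d) ≤ goodCount H (d * m) (parS d m H) := by
  classical
  set C := Finset.univ.filter (fun P : Finset (Fin (d * m)) × (Fin (d * m) → Bool) =>
    (∃ tb, P.1 = trD tb) ∧ ∀ i ∈ P.1, P.2 i = false) with hC
  have hsub : C ⊆ (Finset.univ.filter
      (fun P : Finset (Fin (d * m)) × (Fin (d * m) → Bool) => ∃ h : P.1.card = d,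
        (∀ i ∈ P.1, P.2 i = false) ∧ ExactCopy H (subcubeConfig P.1 h P.2 (parS d m H)))) := by
    rintro ⟨D₀, f⟩ hP
    simp only [hC, Finset.mem_filter, Finset.mem_univ, true_and] at hP
    obtain ⟨⟨tb, rfl⟩, h2⟩ := hP
    exact Finset.mem_filter.mpr ⟨Finset.mem_univ _,
      trD_card tb, h2, exactCopy_parS H tb f⟩
  have hcard : C.card = m ^ d * 2 ^ (d * m - d) := by
    rw [Finset.card_eq_sum_card_fiberwise
      (f := Prod.fst) (t := Finset.univ.image trD) ?_]
    · have : ∀ D₀ ∈ Finset.univ.image (trD (d := d) (m := m)),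
          (C.filter (fun P => P.1 = D₀)).card = 2 ^ (d * m - d) := by
        intro D₀ hD₀
        obtain ⟨tb, -, rfl⟩ := Finset.mem_image.mp hD₀
        have : C.filter (fun P => P.1 = trD tb)
            = {trD tb} ×ˢ (Finset.univ.filter (fun f : Fin (d * m) → Bool =>
                ∀ i ∈ trD tb, f i = false)) := by
          ext ⟨D₀, f⟩
          simp only [hC, Finset.mem_filter, Finset.mem_univ, true_and, Finset.mem_product,
            Finset.mem_singleton]
          constructor
          · rintro ⟨⟨-, h2⟩, rfl⟩
            exact ⟨rfl, h2⟩
          · rintro ⟨rfl, h2⟩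
            exact ⟨⟨⟨tb, rfl⟩, h2⟩, rfl⟩
        rw [this, Finset.card_product, Finset.card_singleton, one_mul,
          card_falseOn _ (trD_card tb)]
      rw [Finset.sum_congr rfl this, Finset.sum_const,
        Finset.card_image_of_injective _ trD_injective, Finset.card_univ, Fintype.card_fun,
        Fintype.card_fin, Fintype.card_fin, smul_eq_mul]
    · rintro ⟨D₀, f⟩ hP
      simp only [Finset.mem_coe, hC, Finset.mem_filter, Finset.mem_univ, true_and] at hP
      obtain ⟨⟨tb, rfl⟩, -⟩ := hP
      exact Finset.mem_image.mpr ⟨tb, Finset.mem_univ _, rfl⟩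
  rw [goodCount, ← hcard]
  exact Finset.card_le_card hsub

lemma exDensity_lower (d m : ℕ) (hd : 0 < d) (hm : 0 < m) (H : Set (Fin d → Bool)) :
    (d.factorial : ℝ) / (d : ℝ) ^ d ≤ exDensity H (d * m) := by
  classical
  have hdn : d ≤ d * m := Nat.le_mul_of_pos_right d hm
  have hchoose : 0 < (d * m).choose d := Nat.choose_pos hdn
  have hdenom : (0 : ℝ) < ((d * m).choose d : ℝ) * 2 ^ (d * m - d) := by
    positivity
  have hnum : (m ^ d * 2 ^ (d * m - d) : ℕ)
      ≤ (Finset.univ : Finset (Finset (Fin (d * m) → Bool))).sup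
        (fun S => goodCount H (d * m) (S : Set (Fin (d * m) → Bool))) := by
    refine le_trans (goodCount_parS d m H) ?_
    have h1 : goodCount H (d * m) (parS d m H)
        = goodCount H (d * m) ((parS d m H).toFinset : Set (Fin (d * m) → Bool)) := by
      rw [Set.coe_toFinset]
    rw [h1]
    exact Finset.le_sup (f := fun S : Finset (Fin (d * m) → Bool) =>
      goodCount H (d * m) (S : Set (Fin (d * m) → Bool))) (Finset.mem_univ _)
  -- numeric inequality in ℕ
  have hnat : d.factorial * ((d * m).choose d * 2 ^ (d * m - d))
      ≤ (m ^ d * 2 ^ (d * m - d)) * d ^ d := by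
    calc d.factorial * ((d * m).choose d * 2 ^ (d * m - d))
        = (d.factorial * (d * m).choose d) * 2 ^ (d * m - d) := by ring
      _ = (d * m).descFactorial d * 2 ^ (d * m - d) := by
          rw [Nat.descFactorial_eq_factorial_mul_choose]
      _ ≤ (d * m) ^ d * 2 ^ (d * m - d) := by
          exact Nat.mul_le_mul_right _ (Nat.descFactorial_le_pow _ _)
      _ = (m ^ d * 2 ^ (d * m - d)) * d ^ d := by rw [mul_pow]; ring
  have hstep1 : (d.factorial : ℝ) / (d : ℝ) ^ d
      ≤ ((m ^ d * 2 ^ (d * m - d) : ℕ) : ℝ) / (((d * m).choose d : ℝ) * 2 ^ (d * m - d)) := by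
    rw [div_le_div_iff₀ (by positivity) hdenom]
    have := hnat
    have hcast : (d.factorial : ℝ) * (((d * m).choose d : ℝ) * 2 ^ (d * m - d))
        ≤ ((m ^ d * 2 ^ (d * m - d) : ℕ) : ℝ) * (d : ℝ) ^ d := by
      push_cast
      exact_mod_cast (by exact_mod_cast hnat :
        ((d.factorial * ((d * m).choose d * 2 ^ (d * m - d)) : ℕ) : ℝ)
          ≤ (((m ^ d * 2 ^ (d * m - d)) * d ^ d : ℕ) : ℝ))
    calc (d.factorial : ℝ) * (((d * m).choose d : ℝ) * 2 ^ (d * m - d))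
        ≤ ((m ^ d * 2 ^ (d * m - d) : ℕ) : ℝ) * (d : ℝ) ^ d := hcast
      _ = _ := by ring
  refine le_trans hstep1 ?_
  rw [exDensity]
  have : ((m ^ d * 2 ^ (d * m - d) : ℕ) : ℝ)
      ≤ (((Finset.univ : Finset (Finset (Fin (d * m) → Bool))).sup
        (fun S => goodCount H (d * m) (S : Set (Fin (d * m) → Bool))) : ℕ) : ℝ) := by
    exact_mod_cast hnum
  exact div_le_div_of_nonneg_right this hdenom.le

-- Part C : monotonicity
section mono
variable {n d : ℕ}

noncomputable def goodFinset {d : ℕ} (H : Set (Fin d → Bool)) (n : ℕ)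
    (S : Set (Fin n → Bool)) : Finset (Finset (Fin n) × (Fin n → Bool)) :=
  ((Finset.univ : Finset (Finset (Fin n) × (Fin n → Bool))).filter
    (fun P => ∃ h : P.1.card = d,
      (∀ i ∈ P.1, P.2 i = false) ∧ ExactCopy H (subcubeConfig P.1 h P.2 S)))

lemma goodCount_eq {d : ℕ} (H : Set (Fin d → Bool)) (n : ℕ) (S : Set (Fin n → Bool)) :
    goodCount H n S = (goodFinset H n S).card := rfl

/-- restriction of a set to the sub-`n`-cube with coordinate `j` fixed to `b` -/
def resS (j : Fin (n + 1)) (b : Bool) (S : Set (Fin (n + 1) → Bool)) :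
    Set (Fin n → Bool) := {w | j.insertNth b w ∈ S}

/-- delete coordinate `j` from a varying set not containing `j` -/
def delD (j : Fin (n + 1)) (D : Finset (Fin (n + 1))) : Finset (Fin n) :=
  Finset.univ.filter (fun k => j.succAbove k ∈ D)

lemma delD_map {j : Fin (n + 1)} {D : Finset (Fin (n + 1))} (hj : j ∉ D) :
    (delD j D).map (Fin.succAboveOrderEmb j).toEmbedding = D := by
  ext k
  simp only [Finset.mem_map, delD, Finset.mem_filter, Finset.mem_univ, true_and,
    Fin.succAboveOrderEmb, RelEmbedding.coe_toEmbedding, OrderEmbedding.coe_ofStrictMono]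
  constructor
  · rintro ⟨a, ha, rfl⟩
    exact ha
  · intro hk
    obtain ⟨a, rfl⟩ := Fin.exists_succAbove_eq (show k ≠ j from fun h => hj (h ▸ hk))
    exact ⟨a, hk, rfl⟩

lemma delD_card {j : Fin (n + 1)} {D : Finset (Fin (n + 1))} (hj : j ∉ D)
    (hD : D.card = d) : (delD j D).card = d := by
  have h := congrArg Finset.card (delD_map (D := D) hj)
  rw [Finset.card_map] at h
  rw [h, hD]

lemma orderEmb_succAbove {j : Fin (n + 1)} {D : Finset (Fin (n + 1))} (hj : j ∉ D)
    (hD : D.card = d) (hD' : (delD j D).card = d) (r : Fin d) :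
    (D.orderEmbOfFin hD) r = j.succAbove ((delD j D).orderEmbOfFin hD' r) := by
  have := Finset.orderEmbOfFin_unique (f := fun r => j.succAbove ((delD j D).orderEmbOfFin hD' r))
    hD (fun x => ?_) ?_
  · exact (congrFun this r).symm
  · have hx : (delD j D).orderEmbOfFin hD' x ∈ delD j D := Finset.orderEmbOfFin_mem _ _ _
    simp only [delD, Finset.mem_filter, Finset.mem_univ, true_and] at hx
    exact hx
  · exact (Fin.succAboveOrderEmb j).strictMono.comp ((delD j D).orderEmbOfFin hD').strictMono

lemma rank_succAbove {j : Fin (n + 1)} {D : Finset (Fin (n + 1))} (hj : j ∉ D)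
    (hD : D.card = d) (hD' : (delD j D).card = d) (a : Fin n) (ha : a ∈ delD j D)
    (hk : j.succAbove a ∈ D) :
    (D.orderIsoOfFin hD).symm ⟨j.succAbove a, hk⟩
      = ((delD j D).orderIsoOfFin hD').symm ⟨a, ha⟩ := by
  set r := ((delD j D).orderIsoOfFin hD').symm ⟨a, ha⟩ with hr
  rw [OrderIso.symm_apply_eq]
  apply Subtype.ext
  have h1 : ((delD j D).orderIsoOfFin hD' r : Fin n) = a := by rw [hr]; simp
  have h2 : (D.orderIsoOfFin hD r : Fin (n + 1)) = D.orderEmbOfFin hD r := rfl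
  rw [h2, orderEmb_succAbove hj hD hD' r]
  show j.succAbove a = j.succAbove (((delD j D).orderEmbOfFin hD') r)
  exact congrArg j.succAbove (by rw [← h1]; rfl)

lemma config_restrict (S : Set (Fin (n + 1) → Bool)) (j : Fin (n + 1))
    (D : Finset (Fin (n + 1))) (hj : j ∉ D) (hD : D.card = d) (f : Fin (n + 1) → Bool) :
    subcubeConfig D hD f S
      = subcubeConfig (delD j D) (delD_card hj hD) (f ∘ j.succAbove) (resS j (f j) S) := by
  ext x
  simp only [subcubeConfig, Set.mem_setOf_eq, resS]
  have : j.insertNth (f j) (fun a => if h : a ∈ delD j D then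
        x (((delD j D).orderIsoOfFin (delD_card hj hD)).symm ⟨a, h⟩) else (f ∘ j.succAbove) a)
      = fun k => if h : k ∈ D then x ((D.orderIsoOfFin hD).symm ⟨k, h⟩) else f k := by
    funext k
    by_cases hk : k = j
    · subst hk
      rw [Fin.insertNth_apply_same, dif_neg hj]
    · obtain ⟨a, rfl⟩ := Fin.exists_succAbove_eq hk
      rw [Fin.insertNth_apply_succAbove]
      by_cases ha : a ∈ delD j D
      · have hmem : j.succAbove a ∈ D := by simpa [delD] using ha
        rw [dif_pos ha, dif_pos hmem, rank_succAbove hj hD _ a ha hmem]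
      · have hmem : j.succAbove a ∉ D := by simpa [delD] using ha
        rw [dif_neg ha, dif_neg hmem]
        rfl
  rw [this]

lemma card_good_not_mem (H : Set (Fin d → Bool)) (S : Set (Fin (n + 1) → Bool))
    (j : Fin (n + 1)) :
    ((goodFinset H (n + 1) S).filter (fun P => j ∉ P.1)).card
      ≤ goodCount H n (resS j false S) + goodCount H n (resS j true S) := by
  classical
  set T := ({false} ×ˢ goodFinset H n (resS j false S))
    ∪ ({true} ×ˢ goodFinset H n (resS j true S)) with hT
  have hcardT : T.card ≤ goodCount H n (resS j false S) + goodCount H n (resS j true S) := by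
    refine le_trans (Finset.card_union_le _ _) ?_
    simp [Finset.card_product, goodCount_eq]
  refine le_trans (Finset.card_le_card_of_injOn
    (fun P => (P.2 j, (delD j P.1, P.2 ∘ j.succAbove))) ?_ ?_) hcardT
  · -- maps to
    rintro ⟨D, f⟩ hP
    simp only [Finset.mem_coe, Finset.mem_filter, goodFinset, Finset.mem_univ, true_and] at hP
    obtain ⟨⟨hD, hf, hcopy⟩, hj⟩ := hP
    have hmem : (delD j D, f ∘ j.succAbove) ∈ goodFinset H n (resS j (f j) S) := by
      refine Finset.mem_filter.mpr ⟨Finset.mem_univ _, delD_card hj hD, ?_, ?_⟩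
      · intro a ha
        have : j.succAbove a ∈ D := by simpa [delD] using ha
        exact hf _ this
      · rw [← config_restrict S j D hj hD f]
        exact hcopy
    have hshow : (fun P : Finset (Fin (n + 1)) × (Fin (n + 1) → Bool) =>
        (P.2 j, delD j P.1, P.2 ∘ j.succAbove)) (D, f)
        = (f j, delD j D, f ∘ j.succAbove) := rfl
    rw [hshow, hT]
    rcases hb : f j with _ | _
    · rw [hb] at hmem
      exact Finset.mem_union_left _
        (Finset.mem_product.mpr ⟨Finset.mem_singleton_self _, hmem⟩)
    · rw [hb] at hmem
      exact Finset.mem_union_right _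
        (Finset.mem_product.mpr ⟨Finset.mem_singleton_self _, hmem⟩)
  · -- injective on
    rintro ⟨D, f⟩ hP ⟨D', f'⟩ hQ heq
    simp only [Finset.mem_coe, Finset.mem_filter, goodFinset, Finset.mem_univ, true_and] at hP hQ
    obtain ⟨-, hjP⟩ := hP
    obtain ⟨-, hjQ⟩ := hQ
    simp only [Prod.mk.injEq] at heq
    obtain ⟨h1, h2, h3⟩ := heq
    have hD : D = D' := by
      rw [← delD_map (D := D) hjP, ← delD_map (D := D') hjQ, h2]
    have hfself : ∀ g : Fin (n + 1) → Bool, j.insertNth (g j) (g ∘ j.succAbove) = g := by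
      intro g
      funext k
      by_cases hk : k = j
      · subst hk; rw [Fin.insertNth_apply_same]
      · obtain ⟨a, rfl⟩ := Fin.exists_succAbove_eq hk
        rw [Fin.insertNth_apply_succAbove]; rfl
    have hf : f = f' := by
      rw [← hfself f, ← hfself f', h1, h3]
    simp [hD, hf]

end mono

section mono2
variable {n d : ℕ}

lemma choose_id (hdn : d ≤ n) :
    (n + 1).choose d * (n + 1 - d) = (n + 1) * n.choose d := by
  have h1 := Nat.add_one_mul_choose_eq n (n - d)
  rw [Nat.choose_symm hdn] at h1
  have h2 : n - d + 1 = n + 1 - d := by omega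
  have h3 : (n + 1).choose (n - d + 1) = (n + 1).choose d := by
    rw [h2]
    have : n + 1 - d = n + 1 - d := rfl
    rw [show (n + 1).choose (n + 1 - d) = (n + 1).choose (n + 1 - (n + 1 - d)) from
      (Nat.choose_symm (by omega)).symm]
    congr 1
    omega
  rw [h3] at h1
  rw [show n - d + 1 = n + 1 - d from by omega] at h1
  exact h1.symm

lemma goodCount_le_sup {d n : ℕ} (H : Set (Fin d → Bool)) (S : Set (Fin n → Bool)) :
    goodCount H n S ≤ (Finset.univ : Finset (Finset (Fin n → Bool))).sup
      (fun T => goodCount H n (T : Set (Fin n → Bool))) := by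
  classical
  have h1 : goodCount H n S
      = goodCount H n ((S.toFinset : Finset (Fin n → Bool)) : Set (Fin n → Bool)) := by
    rw [Set.coe_toFinset]
  rw [h1]
  exact Finset.le_sup (f := fun T : Finset (Fin n → Bool) =>
    goodCount H n (T : Set (Fin n → Bool))) (Finset.mem_univ _)

lemma exDensity_nonneg {d n : ℕ} (H : Set (Fin d → Bool)) : 0 ≤ exDensity H n := by
  rw [exDensity]
  positivity

lemma exDensity_succ_le {d n : ℕ} (hdn : d ≤ n) (H : Set (Fin d → Bool)) :
    exDensity H (n + 1) ≤ exDensity H n := by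
  classical
  set M := (Finset.univ : Finset (Finset (Fin n → Bool))).sup
      (fun T => goodCount H n (T : Set (Fin n → Bool))) with hM
  set G := (Finset.univ : Finset (Finset (Fin (n + 1) → Bool))).sup
      (fun T => goodCount H (n + 1) (T : Set (Fin (n + 1) → Bool))) with hG
  have key : G * (n + 1 - d) ≤ 2 * (n + 1) * M := by
    obtain ⟨S₀, -, hS₀⟩ := Finset.exists_mem_eq_sup
      (Finset.univ : Finset (Finset (Fin (n + 1) → Bool))) ⟨∅, Finset.mem_univ ∅⟩
      (fun T : Finset (Fin (n + 1) → Bool) => goodCount H (n + 1) (T : Set (Fin (n + 1) → Bool)))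
    set S : Set (Fin (n + 1) → Bool) := (S₀ : Set (Fin (n + 1) → Bool)) with hS
    set G₀ := goodFinset H (n + 1) S with hG₀
    have hGcard : G = G₀.card := by rw [hG, hS₀, goodCount_eq]
    have hcount : G₀.card * (n + 1 - d)
        = ∑ j : Fin (n + 1), (G₀.filter (fun P => j ∉ P.1)).card := by
      have hswap : ∑ j : Fin (n + 1), (G₀.filter (fun P => j ∉ P.1)).card
          = ∑ P ∈ G₀, (Finset.univ.filter (fun j : Fin (n + 1) => j ∉ P.1)).card := by
        simp only [Finset.card_filter]
        exact Finset.sum_comm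
      have hper : ∀ P ∈ G₀, (Finset.univ.filter (fun j : Fin (n + 1) => j ∉ P.1)).card
          = n + 1 - d := by
        intro P hP
        have hc : P.1.card = d := by
          have := Finset.mem_filter.mp hP
          obtain ⟨-, h, -⟩ := this
          exact h
        have : Finset.univ.filter (fun j : Fin (n + 1) => j ∉ P.1) = P.1ᶜ := by
          ext j; simp
        rw [this, Finset.card_compl, hc, Fintype.card_fin]
      rw [hswap, Finset.sum_congr rfl hper, Finset.sum_const, smul_eq_mul]
    have hbound : ∀ j : Fin (n + 1), (G₀.filter (fun P => j ∉ P.1)).card ≤ M + M := by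
      intro j
      refine le_trans (card_good_not_mem H S j) ?_
      exact Nat.add_le_add (goodCount_le_sup H _) (goodCount_le_sup H _)
    calc G * (n + 1 - d) = G₀.card * (n + 1 - d) := by rw [hGcard]
      _ = ∑ j : Fin (n + 1), (G₀.filter (fun P => j ∉ P.1)).card := hcount
      _ ≤ ∑ _j : Fin (n + 1), (M + M) := Finset.sum_le_sum (fun j _ => hbound j)
      _ = 2 * (n + 1) * M := by
          rw [Finset.sum_const, Finset.card_univ, Fintype.card_fin, smul_eq_mul]; ring
  -- the natural-number density inequality
  have hnat : G * (n.choose d * 2 ^ (n - d)) ≤ M * ((n + 1).choose d * 2 ^ (n + 1 - d)) := by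
    apply Nat.le_of_mul_le_mul_right (c := n + 1 - d) ?_ (by omega)
    calc G * (n.choose d * 2 ^ (n - d)) * (n + 1 - d)
        = (G * (n + 1 - d)) * (n.choose d * 2 ^ (n - d)) := by ring
      _ ≤ (2 * (n + 1) * M) * (n.choose d * 2 ^ (n - d)) := Nat.mul_le_mul_right _ key
      _ = M * (((n + 1) * n.choose d) * (2 ^ (n - d) * 2)) := by ring
      _ = M * (((n + 1).choose d * (n + 1 - d)) * 2 ^ (n + 1 - d)) := by
          rw [← choose_id hdn, show n + 1 - d = (n - d) + 1 from by omega, pow_succ]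
      _ = M * ((n + 1).choose d * 2 ^ (n + 1 - d)) * (n + 1 - d) := by ring
  -- transfer to the reals
  rw [exDensity, exDensity]
  have h1 : 0 < (n.choose d : ℝ) := by exact_mod_cast Nat.choose_pos hdn
  have h2 : 0 < ((n + 1).choose d : ℝ) := by exact_mod_cast Nat.choose_pos (by omega : d ≤ n + 1)
  rw [div_le_div_iff₀ (by positivity) (by positivity)]
  calc (G : ℝ) * ((n.choose d : ℝ) * 2 ^ (n - d))
      = ((G * (n.choose d * 2 ^ (n - d)) : ℕ) : ℝ) := by push_cast; ring
    _ ≤ ((M * ((n + 1).choose d * 2 ^ (n + 1 - d)) : ℕ) : ℝ) := by exact_mod_cast hnat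
    _ = (M : ℝ) * (((n + 1).choose d : ℝ) * 2 ^ (n + 1 - d)) := by push_cast; ring

end mono2

/-- for every configuration `H ⊆ V(Q_d)` and every positive integer `d`,
the `d`-cube density `π(H,d) = lim_{n→∞} ex(H,d,n)` exists and is at least `d!/d^d`. -/
theorem stmt16 {d : ℕ} (hd : 0 < d) (H : Set (Fin d → Bool)) :
    ∃ L : ℝ, Filter.Tendsto (fun n => exDensity H n) Filter.atTop (nhds L) ∧
      (d.factorial : ℝ) / (d : ℝ) ^ d ≤ L := by

  classical
  set g : ℕ → ℝ := fun k => exDensity H (d + k) with hg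
  have hant : Antitone g := by
    apply antitone_nat_of_succ_le
    intro k
    exact exDensity_succ_le (n := d + k) (Nat.le_add_right d k) H
  have hbdd : BddBelow (Set.range g) := ⟨0, by rintro x ⟨k, rfl⟩; exact exDensity_nonneg H⟩
  set L := ⨅ k, g k with hL
  have hgt : Filter.Tendsto g Filter.atTop (nhds L) := tendsto_atTop_ciInf hant hbdd
  have htend : Filter.Tendsto (fun n => exDensity H n) Filter.atTop (nhds L) := by
    have hcomp : Filter.Tendsto (fun n : ℕ => g (n - d)) Filter.atTop (nhds L) :=
      hgt.comp (Filter.tendsto_sub_atTop_nat d)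
    refine hcomp.congr' ?_
    filter_upwards [Filter.eventually_ge_atTop d] with n hn
    simp only [hg]
    congr 1
    omega
  refine ⟨L, htend, ?_⟩
  have hsub : Filter.Tendsto (fun m : ℕ => exDensity H (d * m)) Filter.atTop (nhds L) :=
    htend.comp (Filter.tendsto_atTop_mono (fun m => Nat.le_mul_of_pos_left m hd)
      Filter.tendsto_id)
  refine ge_of_tendsto hsub ?_
  filter_upwards [Filter.eventually_ge_atTop 1] with m hm
  exact exDensity_lower d m hd hm H
end
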